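/- arXiv:1604.03924 — 3 statements merged into one kernel-verified Lean document; each statement's English description precedes it below -/
import Mathlib

section
/- There is an absolute constant C > 0 such that the following holds. Let X be a countable data domain, A : X^n → Y an (ε,δ)-differentially private algorithm, and X = (X₁,…,X_n) ~ P^n, with ε ∈ (0, 1/2] and δ̂ ∈ (0, ε/15]. Define T_i(a, x₁^i) = Z_i(a, x₁^i) if (a, x₁^i) ∈ G_{≤i}(δ̂) and T_i(a, x₁^i) = 0 otherwise, where Z_i(a, x₁^i) = log₂( Pr[X_i = x_i | A(X) = a, X₁^{i−1} = x₁^{i−1}] / Pr[X_i = x_i] ). Then: (1) |T_i(A(X), X₁^i)| ≤ 6ε·log₂(e) with probability 1; and (2) for every (a, x₁^{i−1}) ∈ Y × X^{i−1}, E[ T_i(A(X), X₁^i) | A(X) = a, X₁^{i−1} = x₁^{i−1} ] ≤ C·( ε² + δ̂/ε ), where the bound does not depend on n or i. -/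
open scoped ENNReal

/-- The probability that a sample from the probability mass function `μ` lands in `S`. -/
noncomputable def prob {α : Type*} (μ : PMF α) (S : Set α) : ℝ :=
  (μ.toOuterMeasure S).toReal

/-- The independent coupling of two distributions: a pair whose components are independent
with the given marginal distributions. -/
noncomputable def indepPair {α β : Type*} (p : PMF α) (q : PMF β) : PMF (α × β) :=
  p.bind fun a => q.map fun b => (a, b)

/-- `MaxInfoLe μ b k` : the `b`-approximate max-information of the joint distribution `μ`
is at most `k` (measured in bits):  for every event `O` with `Pr[(X,Z) ∈ O] > b`,
`Pr[(X,Z) ∈ O] - b ≤ 2^k · Pr[X ⊗ Z ∈ O]`. -/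
def MaxInfoLe {α β : Type*} (μ : PMF (α × β)) (b k : ℝ) : Prop :=
  ∀ O : Set (α × β), b < prob μ O →
    prob μ O - b ≤ 2 ^ k * prob (indepPair (μ.map Prod.fst) (μ.map Prod.snd)) O

/-- The `n`-fold product (i.i.d.) distribution `P^n` on datasets of size `n`. -/
noncomputable def iidPMF {X : Type*} (P : PMF X) : (n : ℕ) → PMF (Fin n → X)
  | 0 => PMF.pure (fun i => i.elim0)
  | n + 1 => P.bind fun a => (iidPMF P n).map fun x => Fin.cons a x

/-- The joint distribution of `(X, A(X))` where `X ∼ μ` and `A` is a randomized algorithm. -/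
noncomputable def jointPMF {D Y : Type*} (μ : PMF D) (A : D → PMF Y) : PMF (D × Y) :=
  μ.bind fun x => (A x).map fun y => (x, y)
/-- Two datasets are neighboring if they differ in at most one entry. -/
def Neighbor {X : Type*} {n : ℕ} (x x' : Fin n → X) : Prop :=
  ∃ i : Fin n, ∀ j : Fin n, j ≠ i → x j = x' j

/-- `(ε,δ)`-differential privacy of a randomized algorithm `A` on datasets of size `n`. -/
def DiffPrivate {X Y : Type*} {n : ℕ} (A : (Fin n → X) → PMF Y) (ε δ : ℝ) : Prop :=
  ∀ x x' : Fin n → X, Neighbor x x' → ∀ O : Set Y,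
    prob (A x) O ≤ Real.exp ε * prob (A x') O + δ

/-- `PrefixEq i w x` : the dataset `x` agrees with `w` on all coordinates before `i`
(i.e. `x` has prefix `x₁^{i-1} = w₁^{i-1}`). -/
def PrefixEq {X : Type*} {n : ℕ} (i : Fin n) (w x : Fin n → X) : Prop :=
  ∀ j : Fin n, (j : ℕ) < (i : ℕ) → x j = w j

/-- The conditional probability `Pr[X_i ∈ O | A(X) = a, X₁^{i-1} = w₁^{i-1}]`, computed from the
joint distribution `μ` of the pair `(X, A(X))`. -/
noncomputable def condXi {X Y : Type*} {n : ℕ} (μ : PMF ((Fin n → X) × Y)) (i : Fin n)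
    (a : Y) (w : Fin n → X) (O : Set X) : ℝ :=
  prob μ {p | p.2 = a ∧ PrefixEq i w p.1 ∧ p.1 i ∈ O} /
    prob μ {p | p.2 = a ∧ PrefixEq i w p.1}

/-- `(ε,δ)`-indistinguishability of two distributions presented as set functions. -/
def IndistFn {D : Type*} (F G : Set D → ℝ) (ε δ : ℝ) : Prop :=
  ∀ O : Set D, F O ≤ Real.exp ε * G O + δ ∧ G O ≤ Real.exp ε * F O + δ

/-- The set `E_i(δ̂)` of "good" output/prefix pairs `(a, x₁^{i-1})`: those for which the marginal
distribution of `X_i` is `(3ε, δ̂)`-indistinguishable from the conditional distribution of `X_i`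
given `A(X) = a` and `X₁^{i-1} = x₁^{i-1}`. -/
def Eset {X Y : Type*} {n : ℕ} (μ : PMF ((Fin n → X) × Y)) (P : PMF X) (i : Fin n)
    (ε δhat : ℝ) : Set (Y × (Fin n → X)) :=
  {q | IndistFn (fun O => prob P O) (fun O => condXi μ i q.1 q.2 O) (3 * ε) δhat}

/-- The set `F_i` of output/prefix pairs `(a, x₁^i)` for which the likelihood ratio
`Pr[X_i = x_i | a, x₁^{i-1}] / Pr[X_i = x_i]` lies in `[e^{-6ε}, e^{6ε}]`. -/
def Fset {X Y : Type*} {n : ℕ} (μ : PMF ((Fin n → X) × Y)) (P : PMF X) (i : Fin n)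
    (ε : ℝ) : Set (Y × (Fin n → X)) :=
  {q | Real.exp (-(6 * ε)) ≤ condXi μ i q.1 q.2 {q.2 i} / (P (q.2 i)).toReal ∧
       condXi μ i q.1 q.2 {q.2 i} / (P (q.2 i)).toReal ≤ Real.exp (6 * ε)}

/-- `Z_i(a, x₁^i) = log₂( Pr[X_i = x_i | a, x₁^{i-1}] / Pr[X_i = x_i] )`. -/
noncomputable def Zi {X Y : Type*} {n : ℕ} (μ : PMF ((Fin n → X) × Y)) (P : PMF X)
    (i : Fin n) (q : Y × (Fin n → X)) : ℝ :=
  Real.logb 2 (condXi μ i q.1 q.2 {q.2 i} / (P (q.2 i)).toReal)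

/-- The set `G_i(δ̂)` of "good" tuples: `(a, x₁^{i-1}) ∈ E_i(δ̂)` and `(a, x₁^i) ∈ F_i`. -/
def Gset {X Y : Type*} {n : ℕ} (μ : PMF ((Fin n → X) × Y)) (P : PMF X) (i : Fin n)
    (ε δhat : ℝ) : Set (Y × (Fin n → X)) :=
  {q | q ∈ Eset μ P i ε δhat ∧ q ∈ Fset μ P i ε}

/-- `G_{≤ i}(δ̂)` : membership in `G_j(δ̂)` for every `j ≤ i`. -/
def GleSet {X Y : Type*} {n : ℕ} (μ : PMF ((Fin n → X) × Y)) (P : PMF X) (i : Fin n)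
    (ε δhat : ℝ) : Set (Y × (Fin n → X)) :=
  {q | ∀ j : Fin n, j ≤ i → q ∈ Gset μ P j ε δhat}

/-- `T_i(a, x₁^i)` equals `Z_i(a, x₁^i)` on the good set `G_{≤ i}(δ̂)` and `0` otherwise. -/
noncomputable def Ti {X Y : Type*} {n : ℕ} (μ : PMF ((Fin n → X) × Y)) (P : PMF X)
    (i : Fin n) (ε δhat : ℝ) : (Y × (Fin n → X)) → ℝ :=
  (GleSet μ P i ε δhat).indicator (Zi μ P i)


lemma toOM_le_one {α : Type*} (μ : PMF α) (s : Set α) : μ.toOuterMeasure s ≤ 1 := by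
  rw [PMF.toOuterMeasure_apply]
  calc ∑' x, s.indicator (⇑μ) x ≤ ∑' x, μ x := ENNReal.tsum_le_tsum (fun x => Set.indicator_le_self _ _ x)
  _ = 1 := μ.tsum_coe

lemma toOM_ne_top {α : Type*} (μ : PMF α) (s : Set α) : μ.toOuterMeasure s ≠ ⊤ :=
  ne_top_of_le_ne_top ENNReal.one_ne_top (toOM_le_one μ s)

lemma prob_nonneg {α : Type*} (μ : PMF α) (s : Set α) : 0 ≤ prob μ s := ENNReal.toReal_nonneg

lemma prob_le_one {α : Type*} (μ : PMF α) (s : Set α) : prob μ s ≤ 1 := by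
  have := toOM_le_one μ s
  simpa [prob] using ENNReal.toReal_mono ENNReal.one_ne_top this

lemma prob_mono {α : Type*} (μ : PMF α) {s t : Set α} (h : s ⊆ t) : prob μ s ≤ prob μ t :=
  ENNReal.toReal_mono (toOM_ne_top μ t) (μ.toOuterMeasure.mono h)

lemma prob_univ {α : Type*} (μ : PMF α) : prob μ Set.univ = 1 := by
  simp [prob, PMF.toOuterMeasure_apply, μ.tsum_coe]

open Classical in
lemma tsum_fiber_ennreal {α β : Type*} (μ : PMF α) (g : α → β) (B : Set α) (O : Set β) :
    μ.toOuterMeasure {p | p ∈ B ∧ g p ∈ O} =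
      ∑' v : β, O.indicator (fun v => μ.toOuterMeasure {p | p ∈ B ∧ g p = v}) v := by
  have h1 : ∀ v : β, O.indicator (fun v => μ.toOuterMeasure {p | p ∈ B ∧ g p = v}) v
      = ∑' p : α, (if p ∈ B ∧ g p = v ∧ v ∈ O then μ p else 0) := by
    intro v
    by_cases hv : v ∈ O
    · rw [Set.indicator_of_mem hv, PMF.toOuterMeasure_apply]
      refine tsum_congr fun p => ?_
      simp only [Set.indicator_apply, Set.mem_setOf_eq, hv, and_true]
    · rw [Set.indicator_of_notMem hv]
      symm
      simp [hv]
  rw [tsum_congr h1, ENNReal.tsum_comm, PMF.toOuterMeasure_apply]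
  refine tsum_congr fun p => ?_
  rw [tsum_eq_single (g p) (by intro v hv; simp only [ite_eq_right_iff]; rintro ⟨-, h, -⟩; exact absurd h.symm hv)]
  simp only [Set.indicator_apply, Set.mem_setOf_eq, eq_self_iff_true, true_and]

lemma prob_fiber {α β : Type*} (μ : PMF α) (g : α → β) (B : Set α) (O : Set β) :
    prob μ {p | p ∈ B ∧ g p ∈ O} =
      ∑' v : β, O.indicator (fun v => prob μ {p | p ∈ B ∧ g p = v}) v := by
  unfold prob
  rw [tsum_fiber_ennreal, ENNReal.tsum_toReal_eq]
  · refine tsum_congr fun v => ?_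
    by_cases hv : v ∈ O
    · simp [Set.indicator_of_mem hv]
    · simp [Set.indicator_of_notMem hv]
  · intro v
    by_cases hv : v ∈ O
    · simpa [Set.indicator_of_mem hv] using toOM_ne_top μ _
    · simp [Set.indicator_of_notMem hv]

lemma summable_fiber {α β : Type*} (μ : PMF α) (g : α → β) (B : Set α) :
    Summable fun v : β => prob μ {p | p ∈ B ∧ g p = v} := by
  apply ENNReal.summable_toReal
  have := tsum_fiber_ennreal μ g B (Set.univ)
  simp only [Set.indicator_univ] at this
  rw [← this]
  exact toOM_ne_top μ _

lemma key_pt (p q : ℝ) (hp : 0 < p) (hq : 0 ≤ q) :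
    q * Real.log (q / p) ≤ (q - p) + p * (q / p - 1) ^ 2 := by
  rcases eq_or_lt_of_le hq with h | h
  · subst h
    have : (0:ℝ)/p = 0 := zero_div p
    rw [this]
    norm_num
  · have hl : Real.log (q / p) ≤ q / p - 1 := Real.log_le_sub_one_of_pos (by positivity)
    have h2 : q * Real.log (q / p) ≤ q * (q / p - 1) := by nlinarith
    have h3 : q * (q / p - 1) = (q - p) + p * (q / p - 1) ^ 2 := by field_simp; ring
    linarith

section Congr
variable {X Y : Type*} {n : ℕ} (μ : PMF ((Fin n → X) × Y)) (P : PMF X)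

lemma prefixEq_congr {j : Fin n} {w₁ w₂ : Fin n → X}
    (h : ∀ k : Fin n, (k : ℕ) < (j : ℕ) → w₁ k = w₂ k) (x : Fin n → X) :
    PrefixEq j w₁ x ↔ PrefixEq j w₂ x := by
  unfold PrefixEq
  exact forall_congr' fun k => forall_congr' fun hk => by rw [h k hk]

lemma condXi_congr {j : Fin n} {w₁ w₂ : Fin n → X}
    (h : ∀ k : Fin n, (k : ℕ) < (j : ℕ) → w₁ k = w₂ k) (a : Y) (O : Set X) :
    condXi μ j a w₁ O = condXi μ j a w₂ O := by
  unfold condXi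
  congr 2
  · exact Set.ext fun p => by rw [Set.mem_setOf_eq, Set.mem_setOf_eq, prefixEq_congr h]
  · exact Set.ext fun p => by rw [Set.mem_setOf_eq, Set.mem_setOf_eq, prefixEq_congr h]

lemma gset_congr {j : Fin n} {ε δhat : ℝ} {w₁ w₂ : Fin n → X}
    (h : ∀ k : Fin n, (k : ℕ) ≤ (j : ℕ) → w₁ k = w₂ k) (a : Y) :
    (a, w₁) ∈ Gset μ P j ε δhat ↔ (a, w₂) ∈ Gset μ P j ε δhat := by
  have h' : ∀ k : Fin n, (k : ℕ) < (j : ℕ) → w₁ k = w₂ k := fun k hk => h k hk.le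
  have hc : ∀ O, condXi μ j a w₁ O = condXi μ j a w₂ O := condXi_congr μ h' a
  have hj : w₁ j = w₂ j := h j le_rfl
  unfold Gset Eset Fset IndistFn
  simp only [Set.mem_setOf_eq, hc, hj]

lemma update_prefix_congr {i j : Fin n} (hji : j ≤ i) (w : Fin n → X) (v v' : X) :
    ∀ k : Fin n, (k : ℕ) < (j : ℕ) → Function.update w i v k = Function.update w i v' k := by
  intro k hk
  have hki : k ≠ i := by
    intro hh; subst hh
    exact absurd (lt_of_lt_of_le hk hji) (lt_irrefl _)
  rw [Function.update_of_ne hki, Function.update_of_ne hki]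

end Congr

lemma logb2_exp (x : ℝ) : Real.logb 2 (Real.exp x) = x * Real.logb 2 (Real.exp 1) := by
  simp [Real.logb, Real.log_exp, div_eq_mul_inv]

lemma Ti_abs_le {X Y : Type*} {n : ℕ} (μ : PMF ((Fin n → X) × Y)) (P : PMF X)
    (i : Fin n) {ε δhat : ℝ} (hε : 0 < ε) (q : Y × (Fin n → X)) :
    |Ti μ P i ε δhat q| ≤ 6 * ε * Real.logb 2 (Real.exp 1) := by
  have hlb : 0 < Real.logb 2 (Real.exp 1) := by
    rw [Real.logb, Real.log_exp]
    exact div_pos one_pos (Real.log_pos one_lt_two)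
  have hrhs : 0 ≤ 6 * ε * Real.logb 2 (Real.exp 1) := by positivity
  unfold Ti
  by_cases hq : q ∈ GleSet μ P i ε δhat
  · rw [Set.indicator_of_mem hq]
    have hF : q ∈ Fset μ P i ε := (hq i le_rfl).2
    obtain ⟨h1, h2⟩ := hF
    set R := condXi μ i q.1 q.2 {q.2 i} / (P (q.2 i)).toReal with hR
    have hRpos : 0 < R := lt_of_lt_of_le (Real.exp_pos _) h1
    unfold Zi
    rw [abs_le]
    constructor
    · rw [← hR]
      have := Real.logb_le_logb_of_le one_lt_two (Real.exp_pos _) h1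
      rw [logb2_exp] at this
      linarith
    · rw [← hR]
      have := Real.logb_le_logb_of_le one_lt_two hRpos h2
      rw [logb2_exp] at this
      linarith
  · rw [Set.indicator_of_notMem hq, abs_zero]
    exact hrhs

lemma exp_sub_one_le (x : ℝ) (hx : 0 ≤ x) : Real.exp x - 1 ≤ x * Real.exp x := by
  have h1 := Real.add_one_le_exp (-x)
  have h2 := Real.exp_pos x
  have h3 : Real.exp (-x) * Real.exp x = 1 := by
    rw [← Real.exp_add]; simp
  nlinarith

lemma ratio_sq_bound {ε r : ℝ} (hε : 0 < ε) (hε2 : ε ≤ 1/2)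
    (h1 : Real.exp (-(6*ε)) ≤ r) (h2 : r ≤ Real.exp (6*ε)) :
    (r - 1)^2 ≤ 36 * Real.exp 6 * ε^2 := by
  have he3 : (1:ℝ) ≤ Real.exp 3 := by
    rw [show (1:ℝ) = Real.exp 0 by simp]; exact Real.exp_le_exp.mpr (by norm_num)
  have e2 : Real.exp (6*ε) ≤ Real.exp 3 := Real.exp_le_exp.mpr (by linarith)
  have e1 : Real.exp (6*ε) - 1 ≤ 6*ε*Real.exp (6*ε) := exp_sub_one_le _ (by linarith)
  have e3 : 1 - 6*ε ≤ Real.exp (-(6*ε)) := by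
    have := Real.add_one_le_exp (-(6*ε)); linarith
  have e4 : r - 1 ≤ 6*ε*Real.exp 3 := by nlinarith [Real.exp_pos (6*ε)]
  have e5 : -(6*ε*Real.exp 3) ≤ r - 1 := by nlinarith
  have := sq_le_sq' e5 e4
  have hexp6 : Real.exp 3 * Real.exp 3 = Real.exp 6 := by
    rw [← Real.exp_add]; norm_num
  nlinarith

lemma exp_three_half_le_five : Real.exp (3/2) ≤ 5 := by
  have h1 : Real.exp (3/2) * Real.exp (3/2) = Real.exp 3 := by
    rw [← Real.exp_add]; norm_num
  have h2 : Real.exp 3 = Real.exp 1 ^ 3 := by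
    rw [Real.exp_one_pow]; norm_num
  have h3 := Real.exp_one_lt_d9
  have h4 := Real.exp_pos (3/2)
  have h5 := Real.exp_pos 1
  have hc : Real.exp 1 ^ 3 < 2.7182818286^3 := pow_lt_pow_left₀ h3 h5.le (by norm_num)
  have hd : (2.7182818286:ℝ)^3 < 25 := by norm_num
  nlinarith [sq_nonneg (Real.exp (3/2) - 5)]

lemma one_sub_exp_neg {ε : ℝ} (hε : 0 < ε) (hε2 : ε ≤ 1/2) :
    3*ε/5 ≤ 1 - Real.exp (-(3*ε)) := by
  have h1 : Real.exp (-(3*ε)) ≤ 1 := Real.exp_le_one_iff.mpr (by linarith)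
  have h2 : 1 - Real.exp (-(3*ε)) ≥ 3*ε * Real.exp (-(3*ε)) := by
    have ha := Real.add_one_le_exp (3*ε)
    have hb := (Real.exp_pos (-(3*ε))).le
    have h3 : Real.exp (-(3*ε)) * Real.exp (3*ε) = 1 := by rw [← Real.exp_add]; simp
    nlinarith [mul_le_mul_of_nonneg_left ha hb]
  have h4 : Real.exp (-(3/2)) ≤ Real.exp (-(3*ε)) := Real.exp_le_exp.mpr (by linarith)
  have h5 : (1:ℝ)/5 ≤ Real.exp (-(3/2)) := by
    have := exp_three_half_le_five
    have h6 : Real.exp (-(3/2)) * Real.exp (3/2) = 1 := by rw [← Real.exp_add]; simp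
    nlinarith [Real.exp_pos (3/2), Real.exp_pos (-(3/2))]
  nlinarith

lemma exp_gap {ε : ℝ} (hε : 0 < ε) : 3*ε ≤ Real.exp (6*ε) - Real.exp (3*ε) := by
  have h1 : Real.exp (3*ε) * Real.exp (3*ε) = Real.exp (6*ε) := by
    rw [← Real.exp_add]; ring_nf
  have h2 := Real.add_one_le_exp (3*ε)
  nlinarith [Real.exp_pos (3*ε)]

set_option maxHeartbeats 1000000 in
lemma core_bound {X : Type*} (m p' : X → ℝ) (S : Set X) (b ε δhat : ℝ)
    (hb : 0 < b) (hε : 0 < ε) (hε2 : ε ≤ 1/2) (hδ : 0 < δhat)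
    (hm0 : ∀ v, 0 ≤ m v) (hp0 : ∀ v, 0 ≤ p' v)
    (hsm : Summable m) (hsp : Summable p')
    (hmt : ∑' v, m v = b) (hpt : ∑' v, p' v = 1)
    (hS : ∀ v, v ∈ S ↔ (Real.exp (-(6*ε)) ≤ (m v / b) / p' v ∧ (m v / b) / p' v ≤ Real.exp (6*ε)))
    (h1 : ∀ O : Set X, (∑' v, O.indicator p' v) ≤ Real.exp (3*ε) * ((∑' v, O.indicator m v) / b) + δhat)
    (h2 : ∀ O : Set X, (∑' v, O.indicator m v) / b ≤ Real.exp (3*ε) * (∑' v, O.indicator p' v) + δhat) :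
    ∑' v, S.indicator (fun v => Real.log ((m v / b) / p' v)) v * m v
      ≤ b * (36 * Real.exp 6 * ε^2 + 2 * δhat / ε) := by
  classical
  set K : ℝ := 36 * Real.exp 6 with hK
  have hK0 : 0 < K := by rw [hK]; positivity
  have hpS : ∀ v ∈ S, 0 < p' v := by
    intro v hv
    rcases (hp0 v).lt_or_eq with h | h
    · exact h
    · exfalso
      have hthis := ((hS v).mp hv).1
      rw [← h, div_zero] at hthis
      exact absurd hthis (not_le.mpr (Real.exp_pos _))
  have hpt_le : ∀ v, S.indicator (fun v => Real.log ((m v / b) / p' v)) v * m v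
      ≤ S.indicator (fun v => m v + (b*K*ε^2 - b) * p' v) v := by
    intro v
    by_cases hv : v ∈ S
    · rw [Set.indicator_of_mem hv, Set.indicator_of_mem hv]
      obtain ⟨hr1, hr2⟩ := (hS v).mp hv
      have hp := hpS v hv
      have hkey := key_pt (p' v) (m v / b) hp (div_nonneg (hm0 v) hb.le)
      have hsq : ((m v / b)/p' v - 1)^2 ≤ K * ε^2 := by
        rw [hK]; exact ratio_sq_bound hε hε2 hr1 hr2
      have hmul : Real.log ((m v / b) / p' v) * m v = b * ((m v / b) * Real.log ((m v / b)/p' v)) := by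
        field_simp
      rw [hmul]
      calc b * ((m v / b) * Real.log ((m v / b)/p' v))
          ≤ b * ((m v / b - p' v) + p' v * ((m v / b)/p' v - 1)^2) :=
            mul_le_mul_of_nonneg_left hkey hb.le
        _ ≤ b * ((m v / b - p' v) + p' v * (K * ε^2)) := by
            refine mul_le_mul_of_nonneg_left (by nlinarith [hp.le]) hb.le
        _ = m v + (b*K*ε^2 - b) * p' v := by field_simp; ring
    · rw [Set.indicator_of_notMem hv, Set.indicator_of_notMem hv, zero_mul]
  have hsg : Summable (S.indicator (fun v => m v + (b*K*ε^2 - b) * p' v)) :=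
    (hsm.add (hsp.mul_left _)).indicator S
  have habs : ∀ v, |S.indicator (fun v => Real.log ((m v / b) / p' v)) v * m v| ≤ 6*ε * m v := by
    intro v
    by_cases hv : v ∈ S
    · rw [Set.indicator_of_mem hv]
      obtain ⟨hr1, hr2⟩ := (hS v).mp hv
      have hrpos : 0 < (m v / b)/p' v := lt_of_lt_of_le (Real.exp_pos _) hr1
      have hlog1 : Real.log ((m v / b)/p' v) ≤ 6*ε := (Real.log_le_iff_le_exp hrpos).mpr hr2
      have hlog2 : -(6*ε) ≤ Real.log ((m v / b)/p' v) := (Real.le_log_iff_exp_le hrpos).mpr hr1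
      rw [abs_mul, abs_of_nonneg (hm0 v)]
      exact mul_le_mul_of_nonneg_right (abs_le.mpr ⟨hlog2, hlog1⟩) (hm0 v)
    · rw [Set.indicator_of_notMem hv, zero_mul, abs_zero]
      exact mul_nonneg (by positivity) (hm0 v)
  have hsf : Summable (fun v => S.indicator (fun v => Real.log ((m v / b) / p' v)) v * m v) := by
    rw [← summable_abs_iff]
    exact Summable.of_nonneg_of_le (fun v => abs_nonneg _) habs (hsm.mul_left (6*ε))
  have hstep1 : ∑' v, S.indicator (fun v => Real.log ((m v / b) / p' v)) v * m v
      ≤ ∑' v, S.indicator (fun v => m v + (b*K*ε^2 - b) * p' v) v := Summable.tsum_le_tsum hpt_le hsf hsg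
  have hsplit : ∀ v, S.indicator (fun v => m v + (b*K*ε^2 - b) * p' v) v
      = S.indicator m v + (b*K*ε^2 - b) * S.indicator p' v := by
    intro v
    by_cases hv : v ∈ S <;>
      simp [Set.indicator_of_mem, Set.indicator_of_notMem, hv]
  have hstep2 : ∑' v, S.indicator (fun v => m v + (b*K*ε^2 - b) * p' v) v
      = (∑' v, S.indicator m v) + (b*K*ε^2 - b) * (∑' v, S.indicator p' v) := by
    rw [tsum_congr hsplit, Summable.tsum_add (hsm.indicator S) ((hsp.indicator S).mul_left _), tsum_mul_left]
  have hMsplit : (∑' v, S.indicator m v) + (∑' v, Sᶜ.indicator m v) = b := by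
    rw [← Summable.tsum_add (hsm.indicator S) (hsm.indicator Sᶜ), ← hmt]
    exact tsum_congr fun v => congrFun (Set.indicator_self_add_compl S m) v
  have hPsplit : (∑' v, S.indicator p' v) + (∑' v, Sᶜ.indicator p' v) = 1 := by
    rw [← Summable.tsum_add (hsp.indicator S) (hsp.indicator Sᶜ), ← hpt]
    exact tsum_congr fun v => congrFun (Set.indicator_self_add_compl S p') v
  set Tp : Set X := {v | b * Real.exp (6*ε) * p' v < m v} with hTpdef
  set Tm : Set X := {v | m v < b * Real.exp (-(6*ε)) * p' v} with hTmdef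
  have hTpnn : ∀ v, (0:ℝ) ≤ Tp.indicator p' v := Set.indicator_nonneg (fun u _ => hp0 u)
  have hTmnn : ∀ v, (0:ℝ) ≤ Tm.indicator p' v := Set.indicator_nonneg (fun u _ => hp0 u)
  have hcompl_le : ∀ v, Sᶜ.indicator p' v ≤ Tp.indicator p' v + Tm.indicator p' v := by
    intro v
    have hnn : (0:ℝ) ≤ Tp.indicator p' v + Tm.indicator p' v := add_nonneg (hTpnn v) (hTmnn v)
    by_cases hv : v ∈ Sᶜ
    · rw [Set.indicator_of_mem hv]
      rcases (hp0 v).lt_or_eq with hp | hp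
      · have hnotS : ¬ (Real.exp (-(6*ε)) ≤ (m v / b) / p' v ∧ (m v / b) / p' v ≤ Real.exp (6*ε)) :=
          fun hc => hv ((hS v).mpr hc)
        rw [not_and_or, not_le, not_le] at hnotS
        rcases hnotS with hlt | hgt
        · have hvm : v ∈ Tm := by
            rw [hTmdef, Set.mem_setOf_eq]
            have ha : m v / b < Real.exp (-(6*ε)) * p' v := (div_lt_iff₀ hp).mp hlt
            have hb' : m v < Real.exp (-(6*ε)) * p' v * b := (div_lt_iff₀ hb).mp ha
            calc m v < Real.exp (-(6*ε)) * p' v * b := hb'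
              _ = b * Real.exp (-(6*ε)) * p' v := by ring
          rw [Set.indicator_of_mem hvm]
          linarith [hTpnn v]
        · have hvp : v ∈ Tp := by
            rw [hTpdef, Set.mem_setOf_eq]
            have ha : Real.exp (6*ε) * p' v < m v / b := (lt_div_iff₀ hp).mp hgt
            have hb' : Real.exp (6*ε) * p' v * b < m v := (lt_div_iff₀ hb).mp ha
            calc b * Real.exp (6*ε) * p' v = Real.exp (6*ε) * p' v * b := by ring
              _ < m v := hb'
          rw [Set.indicator_of_mem hvp]
          linarith [hTmnn v]
      · rw [← hp]; exact hnn
    · rw [Set.indicator_of_notMem hv]; exact hnn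
  have hsTp : Summable (Tp.indicator p') := hsp.indicator _
  have hsTm : Summable (Tm.indicator p') := hsp.indicator _
  have hPPc : (∑' v, Sᶜ.indicator p' v) ≤ (∑' v, Tp.indicator p' v) + (∑' v, Tm.indicator p' v) := by
    calc (∑' v, Sᶜ.indicator p' v) ≤ ∑' v, (Tp.indicator p' v + Tm.indicator p' v) :=
          Summable.tsum_le_tsum hcompl_le (hsp.indicator _) (hsTp.add hsTm)
    _ = _ := Summable.tsum_add hsTp hsTm
  have hTp_pt : ∀ v, b * Real.exp (6*ε) * Tp.indicator p' v ≤ Tp.indicator m v := by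
    intro v
    by_cases hv : v ∈ Tp
    · rw [Set.indicator_of_mem hv, Set.indicator_of_mem hv]
      exact le_of_lt hv
    · rw [Set.indicator_of_notMem hv, Set.indicator_of_notMem hv, mul_zero]
  have hTp_sum : b * Real.exp (6*ε) * (∑' v, Tp.indicator p' v) ≤ ∑' v, Tp.indicator m v := by
    rw [← tsum_mul_left]
    exact Summable.tsum_le_tsum hTp_pt (hsTp.mul_left _) (hsm.indicator _)
  have hTp_ub : (∑' v, Tp.indicator m v) ≤ b * (Real.exp (3*ε) * (∑' v, Tp.indicator p' v) + δhat) := by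
    have h' := (div_le_iff₀ hb).mp (h2 Tp)
    rw [mul_comm b _]
    exact h'
  have hTm_pt : ∀ v, Tm.indicator m v ≤ b * Real.exp (-(6*ε)) * Tm.indicator p' v := by
    intro v
    by_cases hv : v ∈ Tm
    · rw [Set.indicator_of_mem hv, Set.indicator_of_mem hv]
      exact le_of_lt hv
    · rw [Set.indicator_of_notMem hv, Set.indicator_of_notMem hv, mul_zero]
  have hMMle : (∑' v, Tm.indicator m v) ≤ b * Real.exp (-(6*ε)) * (∑' v, Tm.indicator p' v) := by
    calc (∑' v, Tm.indicator m v) ≤ ∑' v, (b * Real.exp (-(6*ε)) * Tm.indicator p' v) :=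
          Summable.tsum_le_tsum hTm_pt (hsm.indicator _) (hsTm.mul_left _)
    _ = _ := tsum_mul_left
  have hTm_ub : b * (∑' v, Tm.indicator p' v)
      ≤ Real.exp (3*ε) * (∑' v, Tm.indicator m v) + b * δhat := by
    have h' := mul_le_mul_of_nonneg_left (h1 Tm) hb.le
    have he : b * (Real.exp (3*ε) * ((∑' v, Tm.indicator m v) / b) + δhat)
        = Real.exp (3*ε) * (∑' v, Tm.indicator m v) + b * δhat := by
      field_simp
    rw [he] at h'
    exact h'
  have hPPpnn : 0 ≤ (∑' v, Tp.indicator p' v) := tsum_nonneg hTpnn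
  have hPPmnn : 0 ≤ (∑' v, Tm.indicator p' v) := tsum_nonneg hTmnn
  have hMMc_nn : 0 ≤ ∑' v, Sᶜ.indicator m v :=
    tsum_nonneg (Set.indicator_nonneg (fun u _ => hm0 u))
  have hPS_nn : 0 ≤ (∑' v, S.indicator p' v) :=
    tsum_nonneg (Set.indicator_nonneg (fun u _ => hp0 u))
  have hPSle1 : (∑' v, S.indicator p' v) ≤ 1 := by
    rw [← hpt]
    exact Summable.tsum_le_tsum (fun v => Set.indicator_le_self' (fun u _ => hp0 u) v) (hsp.indicator S) hsp
  -- abbreviate all the series as scalars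
  set MS := ∑' v, S.indicator m v with hMSd
  set PS := ∑' v, S.indicator p' v with hPSd
  set MSc := ∑' v, Sᶜ.indicator m v with hMScd
  set PSc := ∑' v, Sᶜ.indicator p' v with hPScd
  set Pp := ∑' v, Tp.indicator p' v with hPpd
  set Pm := ∑' v, Tm.indicator p' v with hPmd
  set Mp := ∑' v, Tp.indicator m v with hMpd
  set Mm := ∑' v, Tm.indicator m v with hMmd
  -- scalar arithmetic from here on
  have hTpPP : 3*ε * Pp ≤ δhat := by
    have hA : Real.exp (6*ε) * Pp ≤ Real.exp (3*ε) * Pp + δhat := by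
      have hc : b * (Real.exp (6*ε) * Pp) ≤ b * (Real.exp (3*ε) * Pp + δhat) := by
        nlinarith [hTp_sum, hTp_ub]
      exact (mul_le_mul_iff_right₀ hb).mp hc
    nlinarith [mul_le_mul_of_nonneg_right (exp_gap hε) hPPpnn]
  have hTmPP : (3*ε/5) * Pm ≤ δhat := by
    have hexp : Real.exp (3*ε) * Real.exp (-(6*ε)) = Real.exp (-(3*ε)) := by
      rw [← Real.exp_add]; ring_nf
    have h'' : Real.exp (3*ε) * Mm ≤ b * Real.exp (-(3*ε)) * Pm := by
      calc Real.exp (3*ε) * Mm ≤ Real.exp (3*ε) * (b * Real.exp (-(6*ε)) * Pm) :=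
            mul_le_mul_of_nonneg_left hMMle (Real.exp_pos (3*ε)).le
        _ = b * (Real.exp (3*ε) * Real.exp (-(6*ε))) * Pm := by ring
        _ = b * Real.exp (-(3*ε)) * Pm := by rw [hexp]
    have hfin : (1 - Real.exp (-(3*ε))) * Pm ≤ δhat := by
      have hc : b * ((1 - Real.exp (-(3*ε))) * Pm) ≤ b * δhat := by
        nlinarith [hTm_ub, h'']
      exact (mul_le_mul_iff_right₀ hb).mp hc
    have h5 := one_sub_exp_neg hε hε2
    nlinarith [mul_le_mul_of_nonneg_right h5 hPPmnn]
  have hPPc2 : PSc ≤ 2 * δhat / ε := by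
    rw [le_div_iff₀ hε]
    nlinarith [mul_le_mul_of_nonneg_left hPPc hε.le]
  have hMS : MS - b * PS ≤ b * (2*δhat/ε) := by
    nlinarith [mul_le_mul_of_nonneg_left hPPc2 hb.le]
  calc ∑' v, S.indicator (fun v => Real.log ((m v / b) / p' v)) v * m v
      ≤ MS + (b*K*ε^2 - b) * PS := by rw [← hstep2]; exact hstep1
    _ ≤ b * (K * ε^2 + 2*δhat/ε) := by
        nlinarith [hMS, mul_le_mul_of_nonneg_left hPSle1
          (mul_nonneg (mul_nonneg hb.le hK0.le) (sq_nonneg ε))]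

lemma prob_eq_tsum_indicator {α : Type*} (P : PMF α) (O : Set α) :
    prob P O = ∑' v, O.indicator (fun v => (P v).toReal) v := by
  unfold prob
  rw [PMF.toOuterMeasure_apply, ENNReal.tsum_toReal_eq]
  · refine tsum_congr fun v => ?_
    by_cases hv : v ∈ O
    · simp [Set.indicator_of_mem hv]
    · simp [Set.indicator_of_notMem hv]
  · intro v
    by_cases hv : v ∈ O
    · simpa [Set.indicator_of_mem hv] using PMF.apply_ne_top P v
    · simp [Set.indicator_of_notMem hv]

lemma final_arith {ε δhat : ℝ} (hε : 0 < ε) (hδ : 0 < δhat) (hlog2 : 0 < Real.log 2) :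
    (36 * Real.exp 6 * ε^2 + 2 * δhat / ε) * (Real.log 2)⁻¹
      ≤ 100 * Real.exp 6 * (ε ^ 2 + δhat / ε) := by
  have hd : 0 < δhat/ε := div_pos hδ hε
  have he6 : (1:ℝ) ≤ Real.exp 6 := by
    rw [show (1:ℝ) = Real.exp 0 by simp]
    exact Real.exp_le_exp.mpr (by norm_num)
  have hl2 := Real.log_two_gt_d9
  rw [← div_eq_mul_inv, div_le_iff₀ hlog2]
  have h36 : 36 * Real.exp 6 ≤ 100 * Real.exp 6 * Real.log 2 := by
    nlinarith [Real.exp_pos 6]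
  have h2' : (2:ℝ) ≤ 100 * Real.exp 6 * Real.log 2 := by nlinarith
  have ha := mul_le_mul_of_nonneg_right h36 (sq_nonneg ε)
  have hb' := mul_le_mul_of_nonneg_right h2' hd.le
  have hc : 2 * δhat / ε = 2 * (δhat / ε) := by ring
  nlinarith [ha, hb', hc]

set_option maxHeartbeats 1000000 in
/-- **Lemma 3.9.**  There is an absolute constant `C > 0` such that: if `A` is
`(ε,δ)`-differentially private, `X ∼ P^n`, `ε ∈ (0,1/2]` and `δ̂ ∈ (0, ε/15]`, then
(1) `|T_i(A(X), X₁^i)| ≤ 6ε·log₂ e` with probability 1, and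
(2) for every `(a, w₁^{i-1}) ∈ Y × X^{i-1}`,
`E[T_i(A(X), X₁^i) | A(X) = a, X₁^{i-1} = w₁^{i-1}] ≤ C·(ε² + δ̂/ε)`,
where the constant `C` does not depend on `n` or `i`. -/
theorem stmt_11 : ∃ C : ℝ, 0 < C ∧
    ∀ (X Y : Type) [Countable X] (n : ℕ) (A : (Fin n → X) → PMF Y) (ε δ δhat : ℝ),
      DiffPrivate A ε δ → 0 < ε → ε ≤ 1 / 2 → 0 < δhat → δhat ≤ ε / 15 →
      ∀ (P : PMF X) (i : Fin n),
        prob (jointPMF (iidPMF P n) A)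
            {p | |Ti (jointPMF (iidPMF P n) A) P i ε δhat (p.2, p.1)| ≤
                   6 * ε * Real.logb 2 (Real.exp 1)} = 1 ∧
        ∀ (a : Y) (w : Fin n → X),
          (∑' v : X,
              Ti (jointPMF (iidPMF P n) A) P i ε δhat (a, Function.update w i v) *
                prob (jointPMF (iidPMF P n) A)
                  {p | p.2 = a ∧ PrefixEq i w p.1 ∧ p.1 i = v}) /
            prob (jointPMF (iidPMF P n) A) {p | p.2 = a ∧ PrefixEq i w p.1}
          ≤ C * (ε ^ 2 + δhat / ε) := by
  classical
  refine ⟨100 * Real.exp 6, by positivity, ?_⟩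
  intro X Y _ n A ε δ δhat hDP hε hε2 hδhat hδε P i
  set μ := jointPMF (iidPMF P n) A with hμdef
  constructor
  · have hset : {p : (Fin n → X) × Y |
        |Ti μ P i ε δhat (p.2, p.1)| ≤ 6 * ε * Real.logb 2 (Real.exp 1)} = Set.univ :=
      Set.eq_univ_iff_forall.mpr fun p => Ti_abs_le μ P i hε _
    rw [hset, prob_univ]
  · intro a w
    have hRHSpos : 0 < 100 * Real.exp 6 * (ε^2 + δhat/ε) := by positivity
    -- notation
    set B : Set ((Fin n → X) × Y) := {p | p.2 = a ∧ PrefixEq i w p.1} with hBdef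
    set b : ℝ := prob μ B with hbdef
    set m : X → ℝ := fun v => prob μ {p | p.2 = a ∧ PrefixEq i w p.1 ∧ p.1 i = v} with hmdef
    set p' : X → ℝ := fun v => (P v).toReal with hp'def
    set S : Set X := {v | (a, Function.update w i v) ∈ GleSet μ P i ε δhat} with hSdef
    have hm_nonneg : ∀ v, 0 ≤ m v := fun v => prob_nonneg _ _
    have hp'_nonneg : ∀ v, 0 ≤ p' v := fun v => ENNReal.toReal_nonneg
    have hb_nonneg : 0 ≤ b := prob_nonneg _ _
    -- fiber identities
    have hsetm : ∀ v : X, {p : (Fin n → X) × Y | p.2 = a ∧ PrefixEq i w p.1 ∧ p.1 i = v}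
        = {p : (Fin n → X) × Y | p ∈ B ∧ p.1 i = v} := by
      intro v; ext p; simp only [hBdef, Set.mem_setOf_eq, and_assoc]
    have hm_eq : ∀ v : X, m v = prob μ {p : (Fin n → X) × Y | p ∈ B ∧ (fun q => q.1 i) p = v} := by
      intro v; rw [hmdef]; simp only; rw [hsetm v]
    have hsum_m : Summable m := by
      have := summable_fiber μ (fun q : (Fin n → X) × Y => q.1 i) B
      exact this.congr fun v => (hm_eq v).symm
    have hsum_p : Summable p' :=
      ENNReal.summable_toReal (by rw [P.tsum_coe]; exact ENNReal.one_ne_top)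
    have hMM : ∀ O : Set X,
        prob μ {p : (Fin n → X) × Y | p ∈ B ∧ p.1 i ∈ O} = ∑' v, O.indicator m v := by
      intro O
      rw [prob_fiber μ (fun q : (Fin n → X) × Y => q.1 i) B O]
      exact tsum_congr fun v => by
        by_cases hv : v ∈ O
        · rw [Set.indicator_of_mem hv, Set.indicator_of_mem hv, hm_eq v]
        · rw [Set.indicator_of_notMem hv, Set.indicator_of_notMem hv]
    have hm_total : ∑' v, m v = b := by
      have h := hMM Set.univ
      simp only [Set.indicator_univ] at h
      rw [← h, hbdef]
      congr 1
      ext p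
      simp [Set.mem_setOf_eq]
    have htsum_p1 : ∑' v, p' v = 1 := by
      rw [hp'def, ← ENNReal.tsum_toReal_eq (fun v => PMF.apply_ne_top P v), P.tsum_coe,
        ENNReal.toReal_one]
    have hcond : ∀ O : Set X, condXi μ i a w O = (∑' v, O.indicator m v) / b := by
      intro O
      unfold condXi
      rw [← hMM O]
      have hnum : {p : (Fin n → X) × Y | p.2 = a ∧ PrefixEq i w p.1 ∧ p.1 i ∈ O}
          = {p : (Fin n → X) × Y | p ∈ B ∧ p.1 i ∈ O} := by
        ext p; simp only [hBdef, Set.mem_setOf_eq, and_assoc]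
      rw [hnum]
    have hcond_upd : ∀ (v : X) (O : Set X),
        condXi μ i a (Function.update w i v) O = condXi μ i a w O := by
      intro v O
      refine condXi_congr μ (fun k hk => ?_) a O
      have hki : k ≠ i := by
        intro h; subst h; exact absurd hk (lt_irrefl _)
      exact Function.update_of_ne hki v w
    have hm_sing : ∀ v : X, condXi μ i a w {v} = m v / b := by
      intro v
      rw [hcond {v}]
      congr 1
      rw [tsum_eq_single v (fun u hu => Set.indicator_of_notMem (by simpa using hu) m)]
      exact Set.indicator_of_mem rfl m
    have hratio : ∀ v : X,
        condXi μ i a (Function.update w i v) {Function.update w i v i}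
          / (P (Function.update w i v i)).toReal = (m v / b) / p' v := by
      intro v
      rw [Function.update_self, hcond_upd, hm_sing]
    have hF_iff : ∀ v : X, ((a, Function.update w i v) ∈ Fset μ P i ε) ↔
        (Real.exp (-(6*ε)) ≤ (m v / b) / p' v ∧ (m v / b) / p' v ≤ Real.exp (6*ε)) := by
      intro v
      have hq : ((a, Function.update w i v) ∈ Fset μ P i ε) ↔
          (Real.exp (-(6*ε)) ≤ condXi μ i a (Function.update w i v) {Function.update w i v i}
              / (P (Function.update w i v i)).toReal ∧
            condXi μ i a (Function.update w i v) {Function.update w i v i}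
              / (P (Function.update w i v i)).toReal ≤ Real.exp (6*ε)) := Iff.rfl
      rw [hq, hratio v]
    -- rewrite the goal sum
    have hTi_term : ∀ v : X, Ti μ P i ε δhat (a, Function.update w i v) *
        prob μ {p : (Fin n → X) × Y | p.2 = a ∧ PrefixEq i w p.1 ∧ p.1 i = v}
        = (S.indicator (fun v => Real.log ((m v / b) / p' v)) v * m v) * (Real.log 2)⁻¹ := by
      intro v
      have hps : prob μ {p : (Fin n → X) × Y | p.2 = a ∧ PrefixEq i w p.1 ∧ p.1 i = v} = m v := rfl
      rw [hps]
      unfold Ti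
      by_cases hv : v ∈ S
      · rw [Set.indicator_of_mem (show (a, Function.update w i v) ∈ GleSet μ P i ε δhat from hv),
          Set.indicator_of_mem hv]
        have hz : Zi μ P i (a, Function.update w i v)
            = Real.log ((m v / b) / p' v) * (Real.log 2)⁻¹ := by
          show Real.logb 2 (condXi μ i a (Function.update w i v) {Function.update w i v i}
            / (P (Function.update w i v i)).toReal) = _
          rw [hratio v, Real.logb, div_eq_mul_inv]
        rw [hz]; ring
      · rw [Set.indicator_of_notMem
            (show (a, Function.update w i v) ∉ GleSet μ P i ε δhat from hv),
          Set.indicator_of_notMem hv]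
        ring
    rw [tsum_congr hTi_term, tsum_mul_right]
    rcases eq_or_lt_of_le hb_nonneg with hb0 | hb
    · have hm0 : ∀ v, m v = 0 := by
        intro v
        refine le_antisymm ?_ (hm_nonneg v)
        calc m v ≤ b := prob_mono μ (fun p hp => ⟨hp.1, hp.2.1⟩)
          _ = 0 := hb0.symm
      have hf0 : (∑' v, S.indicator (fun v => Real.log ((m v / b) / p' v)) v * m v) = 0 := by
        rw [tsum_congr (fun v => by rw [hm0 v, mul_zero]), tsum_zero]
      rw [hf0, zero_mul, zero_div]
      exact hRHSpos.le
    · by_cases hSne : ∃ v₀, v₀ ∈ S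
      · obtain ⟨v₀, hv₀⟩ := hSne
        have hE_mem : ∀ v' : X, ((a, Function.update w i v') ∈ Eset μ P i ε δhat) ↔
            IndistFn (fun O => prob P O) (fun O => condXi μ i a w O) (3*ε) δhat := by
          intro v'
          have h1 : ((a, Function.update w i v') ∈ Eset μ P i ε δhat) ↔
              IndistFn (fun O => prob P O)
                (fun O => condXi μ i a (Function.update w i v') O) (3*ε) δhat := Iff.rfl
          rw [h1, show (fun O => condXi μ i a (Function.update w i v') O)
            = (fun O => condXi μ i a w O) from funext (hcond_upd v')]
        have hE : IndistFn (fun O => prob P O) (fun O => condXi μ i a w O) (3*ε) δhat :=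
          (hE_mem v₀).mp ((hv₀ i le_rfl).1)
        have hS_iff : ∀ v : X, v ∈ S ↔
            (Real.exp (-(6*ε)) ≤ (m v / b) / p' v ∧ (m v / b) / p' v ≤ Real.exp (6*ε)) := by
          intro v
          constructor
          · intro hv
            exact (hF_iff v).mp ((hv i le_rfl).2)
          · intro hr
            intro j hj
            rcases lt_or_eq_of_le hj with hlt | heq
            · have hupd : ∀ k : Fin n, (k:ℕ) ≤ (j:ℕ) →
                  Function.update w i v k = Function.update w i v₀ k := by
                intro k hk
                have hji : (j:ℕ) < (i:ℕ) := hlt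
                have hki : k ≠ i := by
                  intro h
                  rw [h] at hk
                  omega
                rw [Function.update_of_ne hki, Function.update_of_ne hki]
              exact (gset_congr μ P hupd a).mpr (hv₀ j hj)
            · subst heq
              exact ⟨(hE_mem v).mpr hE, (hF_iff v).mpr hr⟩
        have h1 : ∀ O : Set X, (∑' v, O.indicator p' v)
            ≤ Real.exp (3*ε) * ((∑' v, O.indicator m v) / b) + δhat := by
          intro O
          simpa only [hcond O, prob_eq_tsum_indicator P O] using (hE O).1
        have h2 : ∀ O : Set X, (∑' v, O.indicator m v) / b
            ≤ Real.exp (3*ε) * (∑' v, O.indicator p' v) + δhat := by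
          intro O
          simpa only [hcond O, prob_eq_tsum_indicator P O] using (hE O).2
        have hcore := core_bound m p' S b ε δhat hb hε hε2 hδhat hm_nonneg hp'_nonneg
          hsum_m hsum_p hm_total htsum_p1 hS_iff h1 h2
        -- finish numerically
        have hlog2 : 0 < Real.log 2 := Real.log_pos one_lt_two
        rw [div_le_iff₀ hb]
        have hstep : (∑' v, S.indicator (fun v => Real.log ((m v / b) / p' v)) v * m v)
              * (Real.log 2)⁻¹
            ≤ (b * (36 * Real.exp 6 * ε^2 + 2 * δhat / ε)) * (Real.log 2)⁻¹ :=
          mul_le_mul_of_nonneg_right hcore (by positivity)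
        refine hstep.trans ?_
        have hnum := final_arith hε hδhat hlog2
        calc (b * (36 * Real.exp 6 * ε^2 + 2 * δhat / ε)) * (Real.log 2)⁻¹
            = b * ((36 * Real.exp 6 * ε^2 + 2 * δhat / ε) * (Real.log 2)⁻¹) := by ring
          _ ≤ b * (100 * Real.exp 6 * (ε ^ 2 + δhat / ε)) :=
              mul_le_mul_of_nonneg_left hnum hb.le
          _ = 100 * Real.exp 6 * (ε ^ 2 + δhat / ε) * b := by ring
      · push_neg at hSne
        have hf0 : (∑' v, S.indicator (fun v => Real.log ((m v / b) / p' v)) v * m v) = 0 := by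
          rw [tsum_congr (fun v => by rw [Set.indicator_of_notMem (hSne v), zero_mul]), tsum_zero]
        rw [hf0, zero_mul, zero_div]
        exact hRHSpos.le
end

section
/- There is an absolute constant c > 0 such that the following holds. For every ε ∈ (0, 1/2], δ ∈ (0, 1/4], and n > 64e, there exists an (ε,δ)-differentially private mechanism C : {0,1}^n → ({0,1}^n ∪ {⊥}) and a (non-product) distribution S over {0,1}^n such that, with X ~ S, I_∞^{β₂}(X; C(X)) ≥ n − 1 − r − log₂(1/β₁) for all β₁ ∈ (0, 1/2 − δ) and β₂ ∈ (0, 1/2 − δ − β₁), where r ≤ c·(log₂(1/δ)·log₂(n))/ε. In particular, (ε,δ)-differential privacy alone implies no nontrivial max-information bound over arbitrary (non-product) input distributions. -/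
open scoped ENNReal

namespace S15

/-- output `some a` with probability `p`, else `none`. -/
noncomputable def withProb {α : Type*} (p : ℝ) (h1 : p ≤ 1) (a : α) : PMF (Option α) :=
  (PMF.bernoulli (Real.toNNReal p) (Real.toNNReal_le_one.2 h1)).map
    (fun b => if b then some a else none)

variable {α : Type*}

lemma withProb_apply_some (p : ℝ) (h1 : p ≤ 1) (a b : α) [Decidable (b = a)] :
    withProb p h1 a (some b) = if b = a then ENNReal.ofReal p else 0 := by
  classical
  rw [withProb, PMF.map_apply, tsum_bool]
  by_cases h : b = a <;> simp [h, PMF.bernoulli_apply, show ((Real.toNNReal p : NNReal) : ℝ≥0∞) = ENNReal.ofReal p from rfl]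

lemma withProb_apply_none (p : ℝ) (h1 : p ≤ 1) (a : α) :
    withProb p h1 a none = 1 - ENNReal.ofReal p := by
  classical
  rw [withProb, PMF.map_apply, tsum_bool]
  simp [PMF.bernoulli_apply, show ((Real.toNNReal p : NNReal) : ℝ≥0∞) = ENNReal.ofReal p from rfl]

lemma prob_withProb (p : ℝ) (h0 : 0 ≤ p) (h1 : p ≤ 1) (a : α) (O : Set (Option α))
    [Decidable (some a ∈ O)] [Decidable (none ∈ O)] :
    prob (withProb p h1 a) O =
      (if some a ∈ O then p else 0) + (if none ∈ O then 1 - p else 0) := by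
  classical
  rw [prob, withProb, PMF.toOuterMeasure_map_apply, PMF.toOuterMeasure_apply, tsum_bool]
  have hp : ENNReal.ofReal p ≤ 1 := by simpa using ENNReal.ofReal_le_one.2 h1
  have e1 : (if (true : Bool) then some a else none) = some a := rfl
  have e2 : (if (false : Bool) then some a else none) = (none : Option α) := rfl
  by_cases hs : some a ∈ O <;> by_cases hn : none ∈ O <;>
    simp only [Set.indicator_apply, Set.mem_preimage, e1, e2, hs, hn, PMF.bernoulli_apply,
      ite_true, ite_false, Bool.cond_true, Bool.cond_false, if_true, if_false, ENNReal.coe_sub, ENNReal.coe_one,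
      show ((Real.toNNReal p : NNReal) : ℝ≥0∞) = ENNReal.ofReal p from rfl]
  · rw [tsub_add_cancel_of_le hp]
    simp
  · rw [zero_add, ENNReal.toReal_ofReal h0]; ring
  · rw [add_zero, ENNReal.toReal_sub_of_le hp (by simp), ENNReal.toReal_ofReal h0]
    simp
  · simp

end S15
namespace S15
open Finset

abbrev V (n : ℕ) := Fin n → ZMod 2

variable {n : ℕ}

/-- Hamming ball as a finset. -/
def ball (t : V n) (R : ℕ) : Finset (V n) :=
  Finset.univ.filter fun y => hammingDist y t ≤ R

lemma zmod2_ne {a b : ZMod 2} (h : a ≠ b) : a = b + 1 := by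
  revert h; revert a b; decide

lemma ball_card_le (t : V n) (R : ℕ) : (ball t R).card ≤ (n + 1) ^ R := by
  classical
  induction R with
  | zero =>
      have : ball t 0 ⊆ {t} := by
        intro y hy
        simp only [ball, mem_filter, Nat.le_zero] at hy
        simp [hammingDist_eq_zero.1 hy.2]
      simpa using Finset.card_le_card this
  | succ R ih =>
      set F : Fin n → V n → V n := fun i z => Function.update z i (z i + 1) with hF
      have hsub : ball t (R + 1) ⊆
          ball t R ∪ Finset.univ.biUnion (fun i => (ball t R).image (F i)) := by
        intro y hy
        simp only [ball, mem_filter, mem_univ, true_and] at hy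
        by_cases h : hammingDist y t ≤ R
        · exact mem_union_left _ (by simp [ball, h])
        · have hpos : 0 < hammingDist y t := by omega
          have : ∃ i, y i ≠ t i := by
            by_contra hc
            push_neg at hc
            have : y = t := funext hc
            simp [this, hammingDist_self] at hpos
          obtain ⟨i, hi⟩ := this
          set z : V n := Function.update y i (t i) with hz
          have hdz : hammingDist z t ≤ R := by
            have hset : (Finset.univ.filter fun j => z j ≠ t j)
                = (Finset.univ.filter fun j => y j ≠ t j).erase i := by
              ext j
              by_cases hj : j = i <;> simp [hz, Function.update_apply, hj]
            have : hammingDist z t = hammingDist y t - 1 := by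
              have hmem : i ∈ Finset.univ.filter fun j => y j ≠ t j := by simp [hi]
              simp only [hammingDist, hset]
              rw [Finset.card_erase_of_mem hmem]
            omega
          have hyz : y = F i z := by
            funext j
            by_cases hj : j = i
            · subst hj
              simp [hF, hz, Function.update_self, zmod2_ne hi]
            · simp [hF, hz, Function.update_apply, hj]
          refine mem_union_right _ ?_
          refine Finset.mem_biUnion.2 ⟨i, mem_univ i, ?_⟩
          exact Finset.mem_image.2 ⟨z, by simp [ball, hdz], hyz.symm⟩
      calc (ball t (R + 1)).card
          ≤ (ball t R ∪ Finset.univ.biUnion (fun i => (ball t R).image (F i))).card :=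
            Finset.card_le_card hsub
        _ ≤ (ball t R).card + (Finset.univ.biUnion (fun i => (ball t R).image (F i))).card :=
            Finset.card_union_le _ _
        _ ≤ (ball t R).card + ∑ i : Fin n, ((ball t R).image (F i)).card :=
            Nat.add_le_add_left (Finset.card_biUnion_le) _
        _ ≤ (ball t R).card + ∑ _i : Fin n, (ball t R).card := by
            exact Nat.add_le_add_left (Finset.sum_le_sum fun i _ => Finset.card_image_le) _
        _ = (n + 1) * (ball t R).card := by
            simp [Finset.sum_const]; ring
        _ ≤ (n + 1) * (n + 1) ^ R := by
            exact Nat.mul_le_mul_left _ ih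
        _ = (n + 1) ^ (R + 1) := by ring

lemma card_V : Fintype.card (V n) = 2 ^ n := by
  have h : Fintype.card (V n) = Fintype.card (ZMod 2) ^ Fintype.card (Fin n) :=
    Fintype.card_fun
  rw [h]
  simp

/-- Gilbert–Varshamov style existence of a large code with minimum distance `d`. -/
lemma exists_code (n d : ℕ) (hd : 1 ≤ d) :
    ∃ T : Finset (V n), T.Nonempty ∧
      (∀ x ∈ T, ∀ y ∈ T, x ≠ y → d ≤ hammingDist x y) ∧
      2 ^ n ≤ T.card * (n + 1) ^ (d - 1) := by
  classical
  set s : Finset (Finset (V n)) :=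
    Finset.univ.filter (fun A => ∀ x ∈ A, ∀ y ∈ A, x ≠ y → d ≤ hammingDist x y) with hs
  have hs0 : (∅ : Finset (V n)) ∈ s := by simp [hs]
  obtain ⟨A, hAs, hAmax⟩ := Finset.exists_max_image s Finset.card ⟨∅, hs0⟩
  have hA : ∀ x ∈ A, ∀ y ∈ A, x ≠ y → d ≤ hammingDist x y := by
    simpa [hs] using hAs
  have hcover : ∀ x : V n, ∃ t ∈ A, hammingDist x t ≤ d - 1 := by
    intro x
    by_contra hc
    push_neg at hc
    have hxA : x ∉ A := fun hx => by simpa [hammingDist_self] using hc x hx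
    have hins : ∀ a ∈ insert x A, ∀ b ∈ insert x A, a ≠ b → d ≤ hammingDist a b := by
      intro a ha b hb hab
      rcases Finset.mem_insert.1 ha with h1 | h1 <;> rcases Finset.mem_insert.1 hb with h2 | h2
      · exact absurd (h1.trans h2.symm) hab
      · subst h1; have := hc b h2; omega
      · subst h2; have := hc a h1; rw [hammingDist_comm]; omega
      · exact hA a h1 b h2 hab
    have : (insert x A).card ≤ A.card :=
      hAmax _ (Finset.mem_filter.2 ⟨Finset.mem_univ _, hins⟩)
    rw [Finset.card_insert_of_notMem hxA] at this
    omega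
  have hsub : (Finset.univ : Finset (V n)) ⊆ A.biUnion (fun t => ball t (d - 1)) := by
    intro x _
    obtain ⟨t, ht, hdist⟩ := hcover x
    exact Finset.mem_biUnion.2 ⟨t, ht, by simp [ball, hdist]⟩
  have hcount : 2 ^ n ≤ A.card * (n + 1) ^ (d - 1) := by
    calc 2 ^ n = (Finset.univ : Finset (V n)).card := by
          rw [Finset.card_univ, card_V]
      _ ≤ (A.biUnion (fun t => ball t (d - 1))).card := Finset.card_le_card hsub
      _ ≤ ∑ t ∈ A, (ball t (d - 1)).card := Finset.card_biUnion_le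
      _ ≤ ∑ _t ∈ A, (n + 1) ^ (d - 1) := by
          gcongr with t
          exact ball_card_le t (d - 1)
      _ = A.card * (n + 1) ^ (d - 1) := by simp [Finset.sum_const, mul_comm]
  refine ⟨A, ?_, hA, hcount⟩
  rw [← Finset.card_pos]
  rcases Nat.eq_zero_or_pos A.card with h | h
  · rw [h, zero_mul] at hcount
    have := Nat.two_pow_pos n
    omega
  · exact h

end S15
namespace S15
open Finset

variable {n : ℕ}

section Code

variable (T : Finset (V n)) (hT : T.Nonempty)

noncomputable def cDist (x : V n) : ℕ := T.inf' hT fun t => hammingDist x t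

noncomputable def cNear (x : V n) : V n :=
  (Finset.exists_mem_eq_inf' hT fun t => hammingDist x t).choose

lemma cNear_spec (x : V n) :
    cNear T hT x ∈ T ∧ hammingDist x (cNear T hT x) = cDist T hT x := by
  obtain ⟨h1, h2⟩ := (Finset.exists_mem_eq_inf' hT fun t => hammingDist x t).choose_spec
  exact ⟨h1, h2.symm⟩

lemma cNear_mem (x : V n) : cNear T hT x ∈ T := (cNear_spec T hT x).1

lemma hamming_cNear (x : V n) : hammingDist x (cNear T hT x) = cDist T hT x :=
  (cNear_spec T hT x).2

lemma cDist_le (x : V n) {t : V n} (ht : t ∈ T) : cDist T hT x ≤ hammingDist x t :=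
  Finset.inf'_le _ ht

lemma cDist_eq_zero {x : V n} (hx : x ∈ T) : cDist T hT x = 0 :=
  Nat.le_zero.1 (by simpa [hammingDist_self] using cDist_le T hT x hx)

lemma cNear_eq_self {x : V n} (hx : x ∈ T) : cNear T hT x = x := by
  have h := hamming_cNear T hT x
  rw [cDist_eq_zero T hT hx] at h
  exact (hammingDist_eq_zero.1 h).symm

lemma cDist_lipschitz (x x' : V n) (h : hammingDist x x' ≤ 1) :
    cDist T hT x ≤ cDist T hT x' + 1 := by
  have h1 : cDist T hT x ≤ hammingDist x (cNear T hT x') :=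
    cDist_le T hT x (cNear_mem T hT x')
  have h2 : hammingDist x (cNear T hT x') ≤ hammingDist x x' + hammingDist x' (cNear T hT x') :=
    hammingDist_triangle _ _ _
  have h3 := hamming_cNear T hT x'
  omega

lemma neighbor_hamming {x x' : V n} (h : Neighbor x x') : hammingDist x x' ≤ 1 := by
  obtain ⟨i, hi⟩ := h
  have : (Finset.univ.filter fun j => x j ≠ x' j) ⊆ {i} := by
    intro j hj
    simp only [Finset.mem_filter] at hj
    by_contra hji
    exact hj.2 (hi j (by simpa using hji))
  simpa [hammingDist] using (Finset.card_le_card this).trans (by simp)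

lemma cNear_congr {m : ℕ}
    (hsep : ∀ x ∈ T, ∀ y ∈ T, x ≠ y → 2 * m + 2 ≤ hammingDist x y)
    {x x' : V n} (hxx' : hammingDist x x' ≤ 1)
    (hx : cDist T hT x ≤ m) (hx' : cDist T hT x' ≤ m) :
    cNear T hT x = cNear T hT x' := by
  by_contra hne
  have hd := hsep _ (cNear_mem T hT x) _ (cNear_mem T hT x') hne
  have t1 : hammingDist (cNear T hT x) (cNear T hT x') ≤
      hammingDist (cNear T hT x) x + hammingDist x (cNear T hT x') :=
    hammingDist_triangle _ _ _
  have t2 : hammingDist x (cNear T hT x') ≤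
      hammingDist x x' + hammingDist x' (cNear T hT x') := hammingDist_triangle _ _ _
  have e1 : hammingDist (cNear T hT x) x = cDist T hT x := by
    rw [hammingDist_comm]; exact hamming_cNear T hT x
  have e2 := hamming_cNear T hT x'
  omega

end Code

/-- The release probability. -/
noncomputable def qval (ε : ℝ) (m D : ℕ) : ℝ :=
  if D ≤ m then Real.exp (-(ε * D)) / 2 else 0

lemma qval_nonneg (ε : ℝ) (m D : ℕ) : 0 ≤ qval ε m D := by
  unfold qval
  split <;> positivity

lemma qval_le_half {ε : ℝ} (hε : 0 ≤ ε) (m D : ℕ) : qval ε m D ≤ 1 / 2 := by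
  unfold qval
  split
  · have : Real.exp (-(ε * D)) ≤ 1 := Real.exp_le_one_iff.2 (neg_nonpos.2 (by positivity))
    linarith
  · norm_num

lemma qval_le_one {ε : ℝ} (hε : 0 ≤ ε) (m D : ℕ) : qval ε m D ≤ 1 :=
  (qval_le_half hε m D).trans (by norm_num)

lemma qval_zero {ε : ℝ} : qval ε m 0 = 1 / 2 := by
  simp [qval]

/-- if `qval` exceeds the threshold `δ` then the distance is `< m`. -/
lemma qval_gt {ε δ : ℝ} (hε : 0 < ε) {m D : ℕ}
    (hm : Real.exp (-(ε * m)) / 2 ≤ δ) (h : δ < qval ε m D) : D < m := by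
  unfold qval at h
  by_cases hD : D ≤ m
  · rw [if_pos hD] at h
    have hexp : Real.exp (-(ε * m)) < Real.exp (-(ε * D)) := by linarith
    have := Real.exp_lt_exp.1 hexp
    have : (D : ℝ) < (m : ℝ) := by nlinarith
    exact_mod_cast this
  · rw [if_neg hD] at h
    have := (qval_nonneg ε m D)
    exfalso
    have h0 : (0:ℝ) < Real.exp (-(ε * m)) / 2 := by positivity
    linarith

/-- Key pointwise inequality L1. -/
lemma qval_L1 {ε δ : ℝ} (hε : 0 < ε) (hδ : 0 < δ) {m Dx Dx' : ℕ}
    (hm : Real.exp (-(ε * m)) / 2 ≤ δ) (h : Dx' ≤ Dx + 1) :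
    qval ε m Dx ≤ Real.exp ε * qval ε m Dx' + δ := by
  have he1 : (1:ℝ) ≤ Real.exp ε := Real.one_le_exp_iff.2 hε.le
  by_cases hx : Dx ≤ m
  · by_cases hx' : Dx' ≤ m
    · have : Real.exp (-(ε * Dx)) ≤ Real.exp ε * Real.exp (-(ε * Dx')) := by
        rw [← Real.exp_add]
        apply Real.exp_le_exp.2
        have : (Dx' : ℝ) ≤ (Dx : ℝ) + 1 := by exact_mod_cast h
        nlinarith
      simp only [qval, if_pos hx, if_pos hx']
      linarith
    · -- Dx' > m, so Dx ≥ m and qval Dx ≤ δ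
      have hDx : m ≤ Dx := by omega
      have : Real.exp (-(ε * Dx)) ≤ Real.exp (-(ε * m)) := by
        apply Real.exp_le_exp.2
        have : (m : ℝ) ≤ (Dx : ℝ) := by exact_mod_cast hDx
        nlinarith
      have hq : qval ε m Dx ≤ δ := by
        simp only [qval, if_pos hx]; linarith
      have h0' := qval_nonneg ε m Dx'
      have : 0 ≤ Real.exp ε * qval ε m Dx' := by positivity
      linarith
  · have : qval ε m Dx = 0 := by simp [qval, hx]
    rw [this]
    have : 0 ≤ Real.exp ε * qval ε m Dx' := by
      have := qval_nonneg ε m Dx'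
      positivity
    linarith

/-- Key pointwise inequality L2 (complement side). -/
lemma qval_L2 {ε δ : ℝ} (hε : 0 < ε) (hεhalf : ε ≤ 1/2) (hδ : 0 < δ) {m Dx Dx' : ℕ}
    (hm : Real.exp (-(ε * m)) / 2 ≤ δ) (h : Dx ≤ Dx' + 1) :
    1 - qval ε m Dx ≤ Real.exp ε * (1 - qval ε m Dx') + δ := by
  have he1 : (1:ℝ) ≤ Real.exp ε := Real.one_le_exp_iff.2 hε.le
  have hq' := qval_le_half hε.le m Dx'
  have hq'0 := qval_nonneg ε m Dx'
  have hq0 := qval_nonneg ε m Dx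
  by_cases hc : qval ε m Dx' ≤ δ
  · nlinarith
  · push_neg at hc
    have hDx' : Dx' < m := qval_gt hε hm hc
    have hx : Dx ≤ m := by omega
    have hx' : Dx' ≤ m := by omega
    -- qval Dx ≥ exp(-ε) * qval Dx'
    have hlow : Real.exp (-ε) * qval ε m Dx' ≤ qval ε m Dx := by
      simp only [qval, if_pos hx, if_pos hx']
      rw [← mul_div_assoc, ← Real.exp_add]
      have : Real.exp (-(ε * Dx)) ≥ Real.exp (-ε + -(ε * Dx')) := by
        apply Real.exp_le_exp.2
        have : (Dx : ℝ) ≤ (Dx' : ℝ) + 1 := by exact_mod_cast h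
        nlinarith
      linarith
    have hee : 2 ≤ Real.exp ε + Real.exp (-ε) := by
      nlinarith [Real.add_one_le_exp ε, Real.add_one_le_exp (-ε)]
    nlinarith

end S15
namespace S15
open Finset

variable {n : ℕ}

noncomputable def mech (T : Finset (V n)) (hT : T.Nonempty) (ε : ℝ) (hε : 0 ≤ ε) (m : ℕ) :
    V n → PMF (Option (V n)) :=
  fun x => withProb (qval ε m (cDist T hT x)) (qval_le_one hε m _) (cNear T hT x)

lemma mech_dp (T : Finset (V n)) (hT : T.Nonempty) {ε δ : ℝ} (hε : 0 < ε) (hεh : ε ≤ 1/2)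
    (hδ : 0 < δ) (m : ℕ)
    (hm : Real.exp (-(ε * m)) / 2 ≤ δ)
    (hsep : ∀ x ∈ T, ∀ y ∈ T, x ≠ y → 2 * m + 2 ≤ hammingDist x y) :
    DiffPrivate (mech T hT ε hε.le m) ε δ := by
  classical
  intro x x' hnb O
  have hxx' : hammingDist x x' ≤ 1 := neighbor_hamming hnb
  have hx'x : hammingDist x' x ≤ 1 := by rwa [hammingDist_comm]
  have hlip1 : cDist T hT x ≤ cDist T hT x' + 1 := cDist_lipschitz T hT x x' hxx'
  have hlip2 : cDist T hT x' ≤ cDist T hT x + 1 := cDist_lipschitz T hT x' x hx'x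
  simp only [mech]
  rw [prob_withProb _ (qval_nonneg _ _ _) _ _ O, prob_withProb _ (qval_nonneg _ _ _) _ _ O]
  have hL1 : qval ε m (cDist T hT x) ≤ Real.exp ε * qval ε m (cDist T hT x') + δ :=
    qval_L1 hε hδ hm hlip2
  have hL2 : 1 - qval ε m (cDist T hT x) ≤ Real.exp ε * (1 - qval ε m (cDist T hT x')) + δ :=
    qval_L2 hε hεh hδ hm hlip1
  have he1 : (1:ℝ) ≤ Real.exp ε := Real.one_le_exp_iff.2 hε.le
  have hq0 := qval_nonneg ε m (cDist T hT x)
  have hq0' := qval_nonneg ε m (cDist T hT x')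
  have hqh := qval_le_half hε.le m (cDist T hT x)
  have hqh' := qval_le_half hε.le m (cDist T hT x')
  have hNeq : δ < qval ε m (cDist T hT x) → cNear T hT x = cNear T hT x' := by
    intro h
    have h1 : cDist T hT x < m := qval_gt hε hm h
    exact cNear_congr T hT hsep hxx' (by omega) (by omega)
  have hNeq' : δ < qval ε m (cDist T hT x') → cNear T hT x = cNear T hT x' := by
    intro h
    have h1 : cDist T hT x' < m := qval_gt hε hm h
    exact cNear_congr T hT hsep hxx' (by omega) (by omega)
  by_cases h1 : some (cNear T hT x) ∈ O <;> by_cases h2 : some (cNear T hT x') ∈ O <;>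
    by_cases h3 : (none : Option (V n)) ∈ O <;>
    simp only [h1, h2, h3, if_true, if_false, add_zero, zero_add]
  · nlinarith
  · exact hL1
  · -- some Nx ∈ O, some Nx' ∉ O, none ∈ O : goal 1 ≤ e (1 - q') + δ
    by_cases hc : δ < qval ε m (cDist T hT x')
    · exact absurd (hNeq' hc ▸ h1) h2
    · push_neg at hc; nlinarith
  · -- some Nx ∈ O, some Nx' ∉ O, none ∉ O : goal q ≤ δ
    by_cases hc : δ < qval ε m (cDist T hT x)
    · exact absurd (hNeq hc ▸ h1) h2
    · push_neg at hc
      simpa using hc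
  · nlinarith
  · nlinarith
  · exact hL2
  · simp [hδ.le]

/-- The diagonal event. -/
def diagEvent (n : ℕ) : Set (V n × Option (V n)) := {p | p.2 = some p.1}

lemma tsum_uniform_mul (T : Finset (V n)) (hT : T.Nonempty) (f : V n → ℝ≥0∞) :
    (∑' x, PMF.uniformOfFinset T hT x * f x) = ∑ x ∈ T, (T.card : ℝ≥0∞)⁻¹ * f x := by
  classical
  rw [tsum_fintype]
  rw [(Finset.sum_subset (Finset.subset_univ T) ?_).symm]
  · exact Finset.sum_congr rfl fun x hx => by rw [PMF.uniformOfFinset_apply, if_pos hx]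
  · intro x _ hx
    rw [PMF.uniformOfFinset_apply, if_neg hx, zero_mul]

lemma sum_const_T (T : Finset (V n)) (hT : T.Nonempty) (c : ℝ≥0∞) :
    ∑ _x ∈ T, (T.card : ℝ≥0∞)⁻¹ * c = c := by
  rw [Finset.sum_const, nsmul_eq_mul, ← mul_assoc, ENNReal.mul_inv_cancel, one_mul]
  · exact_mod_cast Finset.card_ne_zero_of_mem hT.choose_spec
  · exact ENNReal.natCast_ne_top _

lemma mech_apply_some (T : Finset (V n)) (hT : T.Nonempty) (ε : ℝ) (hε : 0 ≤ ε) (m : ℕ)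
    {x : V n} (hx : x ∈ T) (a : V n) :
    mech T hT ε hε m x (some a) = if a = x then ENNReal.ofReal (1/2) else 0 := by
  classical
  rw [mech, withProb_apply_some, cNear_eq_self T hT hx, cDist_eq_zero T hT hx, qval_zero]

lemma joint_prob (T : Finset (V n)) (hT : T.Nonempty) (ε : ℝ) (hε : 0 ≤ ε) (m : ℕ) :
    prob (jointPMF (PMF.uniformOfFinset T hT) (mech T hT ε hε m)) (diagEvent n) = 1/2 := by
  classical
  rw [prob, jointPMF, PMF.toOuterMeasure_bind_apply]
  have hinner : ∀ x : V n, ((mech T hT ε hε m x).map fun y => (x, y)).toOuterMeasure (diagEvent n)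
      = (mech T hT ε hε m x) (some x) := by
    intro x
    rw [PMF.toOuterMeasure_map_apply]
    have hpre : ((fun y => (x, y)) ⁻¹' (diagEvent n)) = {some x} := by
      ext y; simp [diagEvent]
    rw [hpre, PMF.toOuterMeasure_apply_singleton]
  simp_rw [hinner]
  rw [tsum_uniform_mul T hT]
  have : ∀ x ∈ T, (T.card : ℝ≥0∞)⁻¹ * (mech T hT ε hε m x) (some x)
      = (T.card : ℝ≥0∞)⁻¹ * ENNReal.ofReal (1/2) := by
    intro x hx
    rw [mech_apply_some T hT ε hε m hx, if_pos rfl]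
  rw [Finset.sum_congr rfl this, sum_const_T T hT]
  rw [ENNReal.toReal_ofReal (by norm_num)]

lemma marg_apply (T : Finset (V n)) (hT : T.Nonempty) (ε : ℝ) (hε : 0 ≤ ε) (m : ℕ) (a : V n) :
    ((PMF.uniformOfFinset T hT).bind (mech T hT ε hε m)) (some a)
      = if a ∈ T then (T.card : ℝ≥0∞)⁻¹ * ENNReal.ofReal (1/2) else 0 := by
  classical
  rw [PMF.bind_apply, tsum_uniform_mul T hT]
  have : ∀ x ∈ T, (T.card : ℝ≥0∞)⁻¹ * (mech T hT ε hε m x) (some a)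
      = if a = x then (T.card : ℝ≥0∞)⁻¹ * ENNReal.ofReal (1/2) else 0 := by
    intro x hx
    rw [mech_apply_some T hT ε hε m hx]
    split <;> simp
  rw [Finset.sum_congr rfl this, Finset.sum_ite_eq T a
    (fun _ => (T.card : ℝ≥0∞)⁻¹ * ENNReal.ofReal (1/2))]

lemma indep_prob (T : Finset (V n)) (hT : T.Nonempty) (ε : ℝ) (hε : 0 ≤ ε) (m : ℕ) :
    prob (indepPair (PMF.uniformOfFinset T hT)
      ((PMF.uniformOfFinset T hT).bind (mech T hT ε hε m))) (diagEvent n)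
      = (T.card : ℝ)⁻¹ * (1/2) := by
  classical
  rw [prob, indepPair, PMF.toOuterMeasure_bind_apply]
  have hinner : ∀ a : V n,
      (((PMF.uniformOfFinset T hT).bind (mech T hT ε hε m)).map fun b => (a, b)).toOuterMeasure
        (diagEvent n)
      = ((PMF.uniformOfFinset T hT).bind (mech T hT ε hε m)) (some a) := by
    intro a
    rw [PMF.toOuterMeasure_map_apply]
    have hpre : ((fun b => (a, b)) ⁻¹' (diagEvent n)) = {some a} := by
      ext b; simp [diagEvent]
    rw [hpre, PMF.toOuterMeasure_apply_singleton]
  simp_rw [hinner]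
  rw [tsum_uniform_mul T hT]
  have : ∀ a ∈ T, (T.card : ℝ≥0∞)⁻¹ * ((PMF.uniformOfFinset T hT).bind (mech T hT ε hε m)) (some a)
      = (T.card : ℝ≥0∞)⁻¹ * ((T.card : ℝ≥0∞)⁻¹ * ENNReal.ofReal (1/2)) := by
    intro a ha
    rw [marg_apply T hT ε hε m a, if_pos ha]
  rw [Finset.sum_congr rfl this, sum_const_T T hT]
  rw [ENNReal.toReal_mul, ENNReal.toReal_inv, ENNReal.toReal_natCast,
    ENNReal.toReal_ofReal (by norm_num)]

lemma jointPMF_map_fst {D Y : Type*} (μ : PMF D) (A : D → PMF Y) :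
    (jointPMF μ A).map Prod.fst = μ := by
  rw [jointPMF, PMF.map_bind]
  have : ∀ x, ((A x).map fun y => (x, y)).map Prod.fst = PMF.pure x := by
    intro x
    rw [PMF.map_comp]
    exact PMF.map_const (A x) x
  simp_rw [this]
  exact PMF.bind_pure μ

lemma jointPMF_map_snd {D Y : Type*} (μ : PMF D) (A : D → PMF Y) :
    (jointPMF μ A).map Prod.snd = μ.bind A := by
  rw [jointPMF, PMF.map_bind]
  have : ∀ x, ((A x).map fun y => (x, y)).map Prod.snd = A x := by
    intro x
    rw [PMF.map_comp]
    exact PMF.map_id (A x)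
  simp_rw [this]

end S15
set_option maxHeartbeats 1000000 in
/-- **Corollary 4.2.**  There is an absolute constant `c > 0` such that for all
`ε ∈ (0,1/2]`, `δ ∈ (0,1/4]` and `n > 64e`, there exist an `(ε,δ)`-differentially private
mechanism `C : {0,1}^n → {0,1}^n ∪ {⊥}`, a distribution `S` over `{0,1}^n`, and an integer `r`
with `r ≤ c·log₂(1/δ)·log₂(n)/ε`, such that with `X ∼ S`,
`I_∞^{β₂}(X; C(X)) ≥ n - 1 - r - log₂(1/β₁)` for all `β₁ ∈ (0, 1/2 - δ)` and
`β₂ ∈ (0, 1/2 - δ - β₁)` (i.e. no bound `I_∞^{β₂} ≤ k` with `k < n - 1 - r - log₂(1/β₁)` can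
hold).  In particular, `(ε,δ)`-differential privacy alone implies no nontrivial
max-information bound over arbitrary input distributions. -/
theorem stmt_15 : ∃ c : ℝ, 0 < c ∧
    ∀ (n : ℕ) (ε δ : ℝ), 64 * Real.exp 1 < (n : ℝ) →
      0 < ε → ε ≤ 1 / 2 → 0 < δ → δ ≤ 1 / 4 →
      ∃ (C : (Fin n → ZMod 2) → PMF (Option (Fin n → ZMod 2)))
        (S : PMF (Fin n → ZMod 2)) (r : ℕ),
        DiffPrivate C ε δ ∧
        (r : ℝ) ≤ c * (Real.logb 2 (1 / δ) * Real.logb 2 n) / ε ∧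
        ∀ β₁ β₂ : ℝ, 0 < β₁ → β₁ < 1 / 2 - δ → 0 < β₂ → β₂ < 1 / 2 - δ - β₁ →
          ∀ k : ℝ, k < (n : ℝ) - 1 - r - Real.logb 2 (1 / β₁) →
            ¬ MaxInfoLe (jointPMF S C) β₂ k := by
  classical
  refine ⟨100, by norm_num, ?_⟩
  intro n ε δ hn hε hεh hδ hδq
  have hexp1 : (2.7:ℝ) < Real.exp 1 := by
    have := Real.exp_one_gt_d9
    linarith
  have hn2R : (2:ℝ) ≤ (n:ℝ) := by nlinarith
  have hn2 : 2 ≤ n := by exact_mod_cast hn2R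
  -- the threshold m
  set m : ℕ := ⌈Real.log (1 / (2*δ)) / ε⌉₊ with hm_def
  have h2δpos : (0:ℝ) < 2*δ := by linarith
  have hlogpos : 0 ≤ Real.log (1 / (2*δ)) := by
    apply Real.log_nonneg
    rw [le_div_iff₀ h2δpos]
    linarith
  have hm : Real.exp (-(ε * m)) / 2 ≤ δ := by
    have h1 : Real.log (1/(2*δ)) / ε ≤ (m:ℝ) := Nat.le_ceil _
    have h2 : Real.log (1/(2*δ)) ≤ ε * m := by
      rw [div_le_iff₀ hε] at h1
      linarith
    have h3 : Real.exp (-(ε*m)) ≤ Real.exp (-Real.log (1/(2*δ))) :=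
      Real.exp_le_exp.2 (by linarith)
    have h4 : Real.exp (-Real.log (1/(2*δ))) = 2*δ := by
      rw [← Real.log_inv, Real.exp_log (by positivity)]
      field_simp
    linarith
  -- the code
  obtain ⟨T, hTne, hsep, hcount⟩ := S15.exists_code n (2*m+2) (by omega)
  have hcount' : 2^n ≤ T.card * (n+1)^(2*m+1) := by
    have : 2*m+2-1 = 2*m+1 := by omega
    rwa [this] at hcount
  set L : ℕ := Nat.clog 2 (n+1) with hL_def
  set r : ℕ := (2*m+1) * L with hr_def
  have hTcard : 2^n ≤ T.card * 2^r := by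
    calc 2^n ≤ T.card * (n+1)^(2*m+1) := hcount'
      _ ≤ T.card * (2^L)^(2*m+1) := by
          gcongr
          exact Nat.le_pow_clog (by norm_num) _
      _ = T.card * 2^r := by rw [← pow_mul, hr_def, Nat.mul_comm L]
  -- abbreviations
  set A := Real.logb 2 (1/δ) with hA_def
  set B := Real.logb 2 n with hB_def
  have h42 : (2:ℝ)^(2:ℝ) = 4 := by
    rw [show (2:ℝ)^(2:ℝ) = (2:ℝ)^((2:ℕ):ℝ) from by norm_num, Real.rpow_natCast]
    norm_num
  have hA2 : 2 ≤ A := by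
    rw [hA_def, Real.le_logb_iff_rpow_le (by norm_num) (by positivity), h42, le_div_iff₀ hδ]
    linarith
  have hB1 : 1 ≤ B := by
    rw [hB_def, Real.le_logb_iff_rpow_le (by norm_num) (by linarith), Real.rpow_one]
    linarith
  -- bound on r
  have hL1 : 1 ≤ L := Nat.clog_pos (by norm_num) (by omega)
  have hLB : (L:ℝ) ≤ 2 * B := by
    have h2 : 2^(L-1) < n+1 := Nat.pow_pred_clog_lt_self (by norm_num) (by omega)
    have h3 : (2:ℕ)^(L-1) ≤ n := by omega
    have h3R : ((2:ℝ))^(L-1:ℕ) ≤ (n:ℝ) := by exact_mod_cast h3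
    have h4 : ((L-1:ℕ):ℝ) ≤ B := by
      rw [hB_def, Real.le_logb_iff_rpow_le (by norm_num) (by linarith), Real.rpow_natCast]
      exact h3R
    have h5 : ((L-1:ℕ):ℝ) = (L:ℝ) - 1 := by
      have : (1:ℕ) ≤ L := hL1
      push_cast [Nat.cast_sub this]
      ring
    rw [h5] at h4
    linarith
  have hmR : (m:ℝ) * ε ≤ A + 1/2 := by
    have h1 : (m:ℝ) < Real.log (1/(2*δ)) / ε + 1 := Nat.ceil_lt_add_one (by positivity)
    have h2 : (m:ℝ) * ε ≤ Real.log (1/(2*δ)) + ε := by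
      have := mul_le_mul_of_nonneg_right h1.le hε.le
      rw [add_mul, div_mul_cancel₀ _ hε.ne'] at this
      linarith
    have h3 : Real.log (1/(2*δ)) ≤ Real.log (1/δ) := by
      apply Real.log_le_log (by positivity)
      rw [div_le_div_iff₀ h2δpos hδ]
      nlinarith
    have h4 : Real.log (1/δ) ≤ A := by
      rw [hA_def, Real.logb, le_div_iff₀ (Real.log_pos (by norm_num))]
      have hl2 : Real.log 2 < 1 := by
        have := Real.log_two_lt_d9
        linarith
      have hlog0 : 0 ≤ Real.log (1/δ) := Real.log_nonneg (by rw [le_div_iff₀ hδ]; linarith)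
      nlinarith
    linarith
  have hrbound : (r:ℝ) ≤ 100 * (A * B) / ε := by
    rw [le_div_iff₀ hε]
    have hrR : (r:ℝ) = (2*(m:ℝ)+1) * (L:ℝ) := by
      rw [hr_def]
      push_cast
      ring
    rw [hrR]
    have h1 : (2*(m:ℝ)+1) * ε ≤ 3 * A := by
      have : (2*(m:ℝ)+1) * ε = 2 * ((m:ℝ)*ε) + ε := by ring
      rw [this]
      nlinarith
    have hL0 : (0:ℝ) ≤ L := Nat.cast_nonneg L
    calc (2*(m:ℝ)+1) * (L:ℝ) * ε = ((2*(m:ℝ)+1) * ε) * L := by ring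
      _ ≤ (3*A) * (2*B) := by
          apply mul_le_mul h1 hLB hL0 (by linarith)
      _ ≤ 100 * (A*B) := by nlinarith
  -- assemble
  refine ⟨S15.mech T hTne ε hε.le m, PMF.uniformOfFinset T hTne, r,
    S15.mech_dp T hTne hε hεh hδ m hm hsep, hrbound, ?_⟩
  intro β₁ β₂ hβ₁ hβ₁' hβ₂ hβ₂' k hk hMI
  have hjoint := S15.joint_prob T hTne ε hε.le m
  have h1 := hMI (S15.diagEvent n) (by rw [hjoint]; linarith)
  rw [hjoint, S15.jointPMF_map_fst, S15.jointPMF_map_snd, S15.indep_prob T hTne ε hε.le m] at h1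
  -- numeric contradiction
  have hcardpos : (0:ℝ) < (T.card : ℝ) := by
    exact_mod_cast Finset.card_pos.2 hTne
  have hk2 : (2:ℝ)^k < 2^((n:ℝ)-1-(r:ℝ)) * β₁ := by
    have h2 : (2:ℝ)^k < 2^((n:ℝ)-1-(r:ℝ)-Real.logb 2 (1/β₁)) :=
      (Real.rpow_lt_rpow_left_iff (by norm_num : (1:ℝ) < 2)).2 hk
    rwa [Real.rpow_sub (by norm_num), Real.rpow_logb (by norm_num) (by norm_num) (by positivity : (0:ℝ) < 1/β₁),
      div_div_eq_mul_div, div_one] at h2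
  have hcardinv : ((T.card:ℝ))⁻¹ ≤ (2:ℝ)^((r:ℝ)-(n:ℝ)) := by
    have h2r : (0:ℝ) < (2:ℝ)^(r:ℕ) := by positivity
    have h2n : (0:ℝ) < (2:ℝ)^(n:ℕ) := by positivity
    have key : (2:ℝ)^(n:ℕ) / (2:ℝ)^(r:ℕ) ≤ (T.card:ℝ) := by
      rw [div_le_iff₀ h2r]
      exact_mod_cast hTcard
    have hinv : ((T.card:ℝ))⁻¹ ≤ ((2:ℝ)^(n:ℕ) / (2:ℝ)^(r:ℕ))⁻¹ := by
      apply inv_anti₀ (by positivity) key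
    have heq : ((2:ℝ)^(n:ℕ) / (2:ℝ)^(r:ℕ))⁻¹ = (2:ℝ)^((r:ℝ)-(n:ℝ)) := by
      rw [Real.rpow_sub (by norm_num), Real.rpow_natCast, Real.rpow_natCast, inv_div]
    rwa [heq] at hinv
  have hfinal : (2:ℝ)^k * ((T.card:ℝ)⁻¹ * (1/2)) < β₁ := by
    have hmono : (2:ℝ)^k * ((T.card:ℝ)⁻¹ * (1/2))
        < ((2:ℝ)^((n:ℝ)-1-(r:ℝ)) * β₁) * ((T.card:ℝ)⁻¹ * (1/2)) :=
      mul_lt_mul_of_pos_right hk2 (by positivity)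
    have hmono2 : ((2:ℝ)^((n:ℝ)-1-(r:ℝ)) * β₁) * ((T.card:ℝ)⁻¹ * (1/2))
        ≤ ((2:ℝ)^((n:ℝ)-1-(r:ℝ)) * β₁) * ((2:ℝ)^((r:ℝ)-(n:ℝ)) * (1/2)) := by
      have hnn : (0:ℝ) ≤ (2:ℝ)^((n:ℝ)-1-(r:ℝ)) * β₁ := by positivity
      gcongr
    have hcalc : ((2:ℝ)^((n:ℝ)-1-(r:ℝ)) * β₁) * ((2:ℝ)^((r:ℝ)-(n:ℝ)) * (1/2)) = β₁ / 4 := by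
      have hh : (2:ℝ)^((n:ℝ)-1-(r:ℝ)) * (2:ℝ)^((r:ℝ)-(n:ℝ)) = (2:ℝ)^(-1:ℝ) := by
        rw [← Real.rpow_add (by norm_num)]
        norm_num
      calc ((2:ℝ)^((n:ℝ)-1-(r:ℝ)) * β₁) * ((2:ℝ)^((r:ℝ)-(n:ℝ)) * (1/2))
          = ((2:ℝ)^((n:ℝ)-1-(r:ℝ)) * (2:ℝ)^((r:ℝ)-(n:ℝ))) * β₁ * (1/2) := by ring
        _ = (2:ℝ)^(-1:ℝ) * β₁ * (1/2) := by rw [hh]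
        _ = β₁ / 4 := by rw [Real.rpow_neg_one]; ring
    linarith
  linarith
end

section
/- Let φ : X^n → ℝ be a test statistic, P a distribution over X, and p : ℝ → [0,1] defined by p(a) = Pr_{x ~ P^n}[φ(x) ≥ a]. Assume that when X ~ P^n, the random variable p(φ(X)) is uniformly distributed on [0,1]. Then if the composition p ∘ φ : X^n → [0,1] has sensitivity Δ (i.e., changing a single entry of the input changes p ∘ φ by at most Δ), it must hold that Δ ≥ 0.37/√n. More precisely, for every δ ∈ (0, 1/2), Δ ≥ (1/2 − δ)/√((n/2)·ln(1/δ)). -/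
open MeasureTheory


lemma integrable_bdd {Ω : Type*} [MeasurableSpace Ω] {μ : Measure Ω} [IsFiniteMeasure μ]
    {f : Ω → ℝ} (hf : Measurable f) {C : ℝ} (h : ∀ x, |f x| ≤ C) : Integrable f μ :=
  (integrable_const C).mono' hf.aestronglyMeasurable (ae_of_all _ fun x => by
    simpa [Real.norm_eq_abs] using h x)

lemma nonempty_of_prob {𝓧 : Type*} [MeasurableSpace 𝓧] (P : Measure 𝓧) [IsProbabilityMeasure P] :
    Nonempty 𝓧 := by
  by_contra h
  rw [not_nonempty_iff] at h
  have h1 := measure_univ (μ := P)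
  rw [Set.univ_eq_empty_iff.mpr h, measure_empty] at h1
  exact zero_ne_one h1

lemma var_le_of_osc {𝓧 : Type*} [MeasurableSpace 𝓧] {P : Measure 𝓧} [IsProbabilityMeasure P]
    {g : 𝓧 → ℝ} (hg : Measurable g) (hb : ∀ a, g a ∈ Set.Icc (0:ℝ) 1)
    {Δ : ℝ} (hosc : ∀ a a', |g a - g a'| ≤ Δ) :
    ∫ a, g a ^ 2 ∂P - (∫ a, g a ∂P) ^ 2 ≤ Δ ^ 2 / 4 := by
  have hne : Nonempty 𝓧 := nonempty_of_prob P
  have hrne : (Set.range g).Nonempty := Set.range_nonempty g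
  have hbdd : BddAbove (Set.range g) := ⟨1, by rintro _ ⟨a, rfl⟩; exact (hb a).2⟩
  have hbddb : BddBelow (Set.range g) := ⟨0, by rintro _ ⟨a, rfl⟩; exact (hb a).1⟩
  set S := sSup (Set.range g) with hS
  set I := sInf (Set.range g) with hI
  set c := (S + I) / 2 with hc
  have hSI : S - I ≤ Δ := by
    have h1 : S ≤ I + Δ := by
      apply csSup_le hrne
      rintro _ ⟨a, rfl⟩
      have h2 : g a - Δ ≤ I := by
        apply le_csInf hrne
        rintro _ ⟨a', rfl⟩
        have := abs_le.mp (hosc a a')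
        linarith [this.2]
      linarith
    linarith
  have hpt : ∀ a, (g a - c) ^ 2 ≤ Δ ^ 2 / 4 := by
    intro a
    have h1 : g a ≤ S := le_csSup hbdd (Set.mem_range_self a)
    have h2 : I ≤ g a := csInf_le hbddb (Set.mem_range_self a)
    have h3 : |g a - c| ≤ Δ / 2 := by
      rw [abs_le]
      constructor
      · rw [hc]; linarith
      · rw [hc]; linarith
    nlinarith [abs_nonneg (g a - c), sq_abs (g a - c)]
  have hint : Integrable g P := integrable_bdd hg (C := 1)
    (fun x => abs_le.mpr ⟨by linarith [(hb x).1], (hb x).2⟩)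
  have hint2 : Integrable (fun a => g a ^ 2) P := integrable_bdd (hg.pow_const 2) (C := 1)
    (fun x => by rw [abs_le]; constructor <;> nlinarith [(hb x).1, (hb x).2])
  have key : ∫ a, (g a - c) ^ 2 ∂P ≤ Δ ^ 2 / 4 := by
    have hDpos : (0:ℝ) ≤ Δ ^ 2 / 4 := le_trans (sq_nonneg _) (hpt Classical.ofNonempty)
    calc ∫ a, (g a - c) ^ 2 ∂P ≤ ∫ _, Δ ^ 2 / 4 ∂P := by
          apply integral_mono _ (integrable_const _) hpt
          apply integrable_bdd ((hg.sub_const c).pow_const 2) (C := Δ ^ 2 / 4)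
          intro x
          rw [abs_le]
          exact ⟨by nlinarith [sq_nonneg (g x - c)], hpt x⟩
      _ = Δ ^ 2 / 4 := by simp
  have e1 : Integrable (fun a => g a ^ 2 - 2 * c * g a) P := hint2.sub (hint.const_mul (2 * c))
  have expand : ∫ a, (g a - c) ^ 2 ∂P = ∫ a, g a ^ 2 ∂P - 2 * c * ∫ a, g a ∂P + c ^ 2 := by
    have h4 : ∀ a, (g a - c) ^ 2 = g a ^ 2 - 2 * c * g a + c ^ 2 := fun a => by ring
    simp_rw [h4]
    rw [integral_add e1 (integrable_const _), integral_sub hint2 (hint.const_mul (2 * c)),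
      MeasureTheory.integral_const_mul, integral_const]
    simp
  nlinarith [sq_nonneg ((∫ a, g a ∂P) - c)]


lemma log_ineq {d : ℝ} (h0 : 0 < d) (h1 : d < 1/2) : 6 * (1/2 - d)^2 ≤ Real.log (1/d) := by
  set s := Real.sqrt d with hs
  have hs0 : 0 < s := Real.sqrt_pos.mpr h0
  have hs2 : s ^ 2 = d := Real.sq_sqrt h0.le
  have hlog : Real.log (1/d) = -(2 * Real.log s) := by
    rw [one_div, Real.log_inv, ← hs2, Real.log_pow]
    push_cast; ring
  have hls : Real.log s ≤ s - 1 := Real.log_le_sub_one_of_pos hs0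
  have h2 : 2 * (1 - s) ≤ Real.log (1/d) := by rw [hlog]; linarith
  have hs' : s ^ 2 < 1/2 := by rw [hs2]; exact h1
  nlinarith [mul_nonneg (by linarith : (0:ℝ) ≤ 1/2 - s^2) (sq_nonneg s), sq_nonneg (s - 1/3)]






lemma var_tensor {𝓧 : Type*} [MeasurableSpace 𝓧] (P : Measure 𝓧) [IsProbabilityMeasure P]
    (Δ : ℝ) : ∀ (n : ℕ) (f : (Fin n → 𝓧) → ℝ), Measurable f → (∀ x, f x ∈ Set.Icc (0:ℝ) 1) →
    (∀ (x : Fin n → 𝓧) (i : Fin n) (v : 𝓧), |f x - f (Function.update x i v)| ≤ Δ) →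
    ∫ x, f x ^ 2 ∂(Measure.pi fun _ : Fin n => P) -
      (∫ x, f x ∂(Measure.pi fun _ : Fin n => P)) ^ 2 ≤ n * Δ ^ 2 / 4 := by
  intro n
  induction n with
  | zero =>
    intro f hf hb hs
    have hconst : ∀ x : Fin 0 → 𝓧, f x = f (fun i => i.elim0) := by
      intro x; congr 1; ext i; exact i.elim0
    simp_rw [hconst]
    simp
  | succ n ih =>
    intro f hf hb hs
    set μn : Measure (Fin n → 𝓧) := Measure.pi fun _ : Fin n => P with hμn
    have hmp := measurePreserving_piFinSuccAbove (fun _ : Fin (n+1) => P) 0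
    set e := MeasurableEquiv.piFinSuccAbove (fun _ : Fin (n+1) => 𝓧) 0 with he
    -- G on the product space
    set G : 𝓧 × (Fin n → 𝓧) → ℝ := fun q => f (Fin.cons q.1 q.2) with hG
    have hcons : Measurable fun q : 𝓧 × (Fin n → 𝓧) => (Fin.cons q.1 q.2 : Fin (n+1) → 𝓧) := by
      rw [measurable_pi_iff]
      intro j
      induction j using Fin.cases with
      | zero => simpa using measurable_fst
      | succ k => simp only [Fin.cons_succ]; exact (measurable_pi_apply k).comp measurable_snd
    have hGm : Measurable G := hf.comp hcons
    have hGb : ∀ q, G q ∈ Set.Icc (0:ℝ) 1 := fun q => hb _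
    have hGint : Integrable G (P.prod μn) := integrable_bdd hGm (C := 1)
      (fun q => abs_le.mpr ⟨by linarith [(hGb q).1], (hGb q).2⟩)
    have hG2int : Integrable (fun q => G q ^ 2) (P.prod μn) :=
      integrable_bdd (hGm.pow_const 2) (C := 1)
        (fun q => by rw [abs_le]; constructor <;> nlinarith [(hGb q).1, (hGb q).2])
    -- transfer integrals
    have hesymm : ∀ q : 𝓧 × (Fin n → 𝓧), e.symm q = Fin.cons q.1 q.2 := by
      intro q
      simp [he, MeasurableEquiv.piFinSuccAbove_symm_apply, Fin.insertNth_zero', Fin.consEquiv]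
    have key : ∀ g : ℝ → ℝ, ∫ x, g (f x) ∂(Measure.pi fun _ : Fin (n+1) => P)
        = ∫ q, g (G q) ∂(P.prod μn) := by
      intro g
      have := hmp.integral_comp e.measurableEmbedding (fun q => g (f (e.symm q)))
      simp only [MeasurableEquiv.symm_apply_apply] at this
      rw [this]
      exact integral_congr_ae (ae_of_all _ fun q => by simp only [hesymm]; rfl)
    -- slice functions
    set g1 : 𝓧 → ℝ := fun a => ∫ y, G (a, y) ∂μn with hg1
    set G2 : 𝓧 → ℝ := fun a => ∫ y, G (a, y) ^ 2 ∂μn with hG2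
    have hGa : ∀ a, Measurable fun y => G (a, y) := fun a => hGm.comp measurable_prodMk_left
    have hGaint : ∀ a, Integrable (fun y => G (a, y)) μn := fun a =>
      integrable_bdd (hGa a) (C := 1)
        (fun y => abs_le.mpr ⟨by linarith [(hGb (a, y)).1], (hGb (a, y)).2⟩)
    have hGa2int : ∀ a, Integrable (fun y => G (a, y) ^ 2) μn := fun a =>
      integrable_bdd ((hGa a).pow_const 2) (C := 1)
        (fun y => by rw [abs_le]; constructor <;> nlinarith [(hGb (a, y)).1, (hGb (a, y)).2])
    have hg1m : Measurable g1 := hGm.stronglyMeasurable.integral_prod_right'.measurable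
    have hG2m : Measurable G2 :=
      (hGm.pow_const 2).stronglyMeasurable.integral_prod_right'.measurable
    have hg1b : ∀ a, g1 a ∈ Set.Icc (0:ℝ) 1 := by
      intro a
      constructor
      · exact integral_nonneg fun y => (hGb (a, y)).1
      · calc ∫ y, G (a, y) ∂μn ≤ ∫ _, (1:ℝ) ∂μn :=
              integral_mono (hGaint a) (integrable_const 1) fun y => (hGb (a, y)).2
          _ = 1 := by simp
    have hG2b : ∀ a, G2 a ∈ Set.Icc (0:ℝ) 1 := by
      intro a
      constructor
      · exact integral_nonneg fun y => sq_nonneg _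
      · calc ∫ y, G (a, y) ^ 2 ∂μn ≤ ∫ _, (1:ℝ) ∂μn :=
              integral_mono (hGa2int a) (integrable_const 1)
                (fun y => by nlinarith [(hGb (a, y)).1, (hGb (a, y)).2])
          _ = 1 := by simp
    -- oscillation of g1
    have hosc : ∀ a a', |g1 a - g1 a'| ≤ Δ := by
      intro a a'
      have hpt : ∀ y, |G (a, y) - G (a', y)| ≤ Δ := by
        intro y
        have h1 := hs (Fin.cons a y) 0 a'
        rwa [Fin.update_cons_zero] at h1
      have h2 : g1 a - g1 a' = ∫ y, (G (a, y) - G (a', y)) ∂μn :=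
        (integral_sub (hGaint a) (hGaint a')).symm
      rw [h2]
      calc |∫ y, (G (a, y) - G (a', y)) ∂μn| ≤ ∫ y, |G (a, y) - G (a', y)| ∂μn :=
            by simpa [Real.norm_eq_abs] using
              norm_integral_le_integral_norm (μ := μn) (fun y => G (a, y) - G (a', y))
        _ ≤ ∫ _, Δ ∂μn := integral_mono ((hGaint a).sub (hGaint a')).abs
            (integrable_const Δ) hpt
        _ = Δ := by simp
    -- conditional variance via IH
    have hcond : ∀ a, G2 a - g1 a ^ 2 ≤ n * Δ ^ 2 / 4 := by
      intro a
      have hsens' : ∀ (y : Fin n → 𝓧) (i : Fin n) (v : 𝓧),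
          |G (a, y) - G (a, Function.update y i v)| ≤ Δ := by
        intro y i v
        have h1 := hs (Fin.cons a y) i.succ v
        rwa [← Fin.cons_update] at h1
      exact ih (fun y => G (a, y)) (hGa a) (fun y => hGb (a, y)) hsens'
    -- Fubini
    have hFub1 : ∫ x, f x ∂(Measure.pi fun _ : Fin (n+1) => P) = ∫ a, g1 a ∂P := by
      rw [key (fun t => t), integral_prod _ hGint]
    have hFub2 : ∫ x, f x ^ 2 ∂(Measure.pi fun _ : Fin (n+1) => P) = ∫ a, G2 a ∂P := by
      rw [key (fun t => t ^ 2), integral_prod _ hG2int]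
    rw [hFub1, hFub2]
    have hg1int : Integrable g1 P := integrable_bdd hg1m (C := 1)
      (fun a => abs_le.mpr ⟨by linarith [(hg1b a).1], (hg1b a).2⟩)
    have hg1sqint : Integrable (fun a => g1 a ^ 2) P := integrable_bdd (hg1m.pow_const 2) (C := 1)
      (fun a => by rw [abs_le]; constructor <;> nlinarith [(hg1b a).1, (hg1b a).2])
    have hG2int' : Integrable G2 P := integrable_bdd hG2m (C := 1)
      (fun a => abs_le.mpr ⟨by linarith [(hG2b a).1], (hG2b a).2⟩)
    have step1 : ∫ a, G2 a ∂P - ∫ a, g1 a ^ 2 ∂P ≤ n * Δ ^ 2 / 4 := by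
      rw [← integral_sub hG2int' hg1sqint]
      calc ∫ a, (G2 a - g1 a ^ 2) ∂P ≤ ∫ _, (n * Δ ^ 2 / 4 : ℝ) ∂P :=
            integral_mono (hG2int'.sub hg1sqint) (integrable_const _) hcond
        _ = n * Δ ^ 2 / 4 := by simp
    have step2 : ∫ a, g1 a ^ 2 ∂P - (∫ a, g1 a ∂P) ^ 2 ≤ Δ ^ 2 / 4 :=
      var_le_of_osc hg1m hg1b hosc
    push_cast
    linarith

/-- **Lemma B.1.**  Let `φ : X^n → ℝ` be a test statistic, `P` a distribution
over `X`, and `p(a) = Pr_{x ∼ P^n}[φ(x) ≥ a]`.  Assume that when `X ∼ P^n`, the random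
variable `p(φ(X))` is uniformly distributed on `[0,1]` (stated via its CDF).  If `p ∘ φ` has
sensitivity `Δ` (changing a single entry of the input changes `p ∘ φ` by at most `Δ`), then
`Δ ≥ 0.37/√n`, and more precisely, for every `d ∈ (0, 1/2)`,
`Δ ≥ (1/2 - d)/√((n/2)·ln(1/d))`. -/
theorem stmt_16 {𝓧 : Type*} [MeasurableSpace 𝓧] (n : ℕ) (P : Measure 𝓧)
    [IsProbabilityMeasure P] (φ : (Fin n → 𝓧) → ℝ) (hφ : Measurable φ) (Δ : ℝ)
    (hunif : ∀ c : ℝ, 0 ≤ c → c ≤ 1 →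
      (Measure.pi fun _ : Fin n => P)
          {x | ((Measure.pi fun _ : Fin n => P) {z | φ x ≤ φ z}).toReal ≤ c} =
        ENNReal.ofReal c)
    (hsens : ∀ (x : Fin n → 𝓧) (i : Fin n) (v : 𝓧),
      |((Measure.pi fun _ : Fin n => P) {z | φ x ≤ φ z}).toReal -
          ((Measure.pi fun _ : Fin n => P) {z | φ (Function.update x i v) ≤ φ z}).toReal| ≤ Δ) :
    0.37 / Real.sqrt n ≤ Δ ∧
      ∀ d : ℝ, 0 < d → d < 1 / 2 →
        (1 / 2 - d) / Real.sqrt ((n / 2) * Real.log (1 / d)) ≤ Δ := by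
  set μ : Measure (Fin n → 𝓧) := Measure.pi fun _ : Fin n => P with hμ
  set f : (Fin n → 𝓧) → ℝ := fun x => (μ {z | φ x ≤ φ z}).toReal with hf
  -- dispatch n = 0 by contradiction
  rcases Nat.eq_zero_or_pos n with hn0 | hnpos
  · exfalso
    subst hn0
    have hone : ∀ x : Fin 0 → 𝓧, f x = 1 := by
      intro x
      have : {z : Fin 0 → 𝓧 | φ x ≤ φ z} = Set.univ := by
        ext z
        have hz : z = x := funext fun i => i.elim0
        simp [hz]
      simp [hf, this]
    have h2 := hunif (1/2) (by norm_num) (by norm_num)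
    have hempty : {x : Fin 0 → 𝓧 | f x ≤ 1/2} = ∅ := by
      ext x
      simp only [Set.mem_setOf_eq, Set.mem_empty_iff_false, iff_false, not_le]
      rw [hone x]; norm_num
    rw [show {x : Fin 0 → 𝓧 | ((Measure.pi fun _ : Fin 0 => P) {z | φ x ≤ φ z}).toReal ≤ 1/2}
        = ∅ from hempty] at h2
    simp only [measure_empty] at h2
    have : ENNReal.ofReal (1/2) ≠ 0 := by
      simp [ENNReal.ofReal_eq_zero]
    exact this h2.symm
  -- n ≥ 1
  have hnR : (1:ℝ) ≤ (n:ℝ) := by exact_mod_cast hnpos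
  have hnRpos : (0:ℝ) < n := by linarith
  -- f is measurable
  have hq : Antitone fun a : ℝ => (μ {z | a ≤ φ z}).toReal := by
    intro a b hab
    apply ENNReal.toReal_mono (measure_ne_top μ _)
    exact measure_mono fun z hz => le_trans hab hz
  have hfm : Measurable f := hq.measurable.comp hφ
  have hfb : ∀ x, f x ∈ Set.Icc (0:ℝ) 1 := by
    intro x
    refine ⟨ENNReal.toReal_nonneg, ?_⟩
    have h1 : μ {z | φ x ≤ φ z} ≤ 1 := prob_le_one
    calc (μ {z | φ x ≤ φ z}).toReal ≤ (1 : ENNReal).toReal :=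
          ENNReal.toReal_mono ENNReal.one_ne_top h1
      _ = 1 := by simp
  -- Δ ≥ 0
  have hΔ0 : 0 ≤ Δ := by
    obtain ⟨a⟩ := nonempty_of_prob P
    obtain ⟨i⟩ : Nonempty (Fin n) := ⟨⟨0, hnpos⟩⟩
    have := hsens (fun _ => a) i a
    rwa [show Function.update (fun _ : Fin n => a) i a = fun _ => a by
      ext j; simp [Function.update], sub_self, abs_zero] at this
  -- the distribution of f is uniform on [0,1]
  haveI : IsProbabilityMeasure (Measure.map f μ) := Measure.isProbabilityMeasure_map hfm.aemeasurable
  have hmap : Measure.map f μ = volume.restrict (Set.Icc (0:ℝ) 1) := by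
    refine Measure.ext_of_Iic _ _ (fun a => ?_)
    rw [Measure.map_apply hfm measurableSet_Iic,
      Measure.restrict_apply measurableSet_Iic]
    rcases lt_or_ge a 0 with ha | ha
    · have h1 : f ⁻¹' Set.Iic a = ∅ := by
        ext x; simp only [Set.mem_preimage, Set.mem_Iic, Set.mem_empty_iff_false, iff_false,
          not_le]
        exact lt_of_lt_of_le ha (hfb x).1
      have h2 : Set.Iic a ∩ Set.Icc (0:ℝ) 1 = ∅ := by
        ext x; simp only [Set.mem_inter_iff, Set.mem_Iic, Set.mem_Icc, Set.mem_empty_iff_false,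
          iff_false]
        rintro ⟨h3, h4, h5⟩; linarith
      rw [h1, h2]
      simp
    rcases le_or_gt a 1 with ha1 | ha1
    · have h1 : f ⁻¹' Set.Iic a = {x | f x ≤ a} := rfl
      have h2 : Set.Iic a ∩ Set.Icc (0:ℝ) 1 = Set.Icc 0 a := by
        ext x; simp only [Set.mem_inter_iff, Set.mem_Iic, Set.mem_Icc]
        constructor
        · rintro ⟨h3, h4, h5⟩; exact ⟨h4, h3⟩
        · rintro ⟨h3, h4⟩; exact ⟨h4, h3, le_trans h4 ha1⟩
      rw [h1, h2, hunif a ha ha1, Real.volume_Icc]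
      simp
    · have h1 : f ⁻¹' Set.Iic a = Set.univ := by
        ext x; simp only [Set.mem_preimage, Set.mem_Iic, Set.mem_univ, iff_true]
        exact le_trans (hfb x).2 ha1.le
      have h2 : Set.Iic a ∩ Set.Icc (0:ℝ) 1 = Set.Icc 0 1 := by
        ext x; simp only [Set.mem_inter_iff, Set.mem_Iic, Set.mem_Icc]
        constructor
        · rintro ⟨h3, h4, h5⟩; exact ⟨h4, h5⟩
        · rintro ⟨h3, h4⟩; exact ⟨le_trans h4 ha1.le, h3, h4⟩
      rw [h1, h2, Real.volume_Icc]
      simp [measure_univ]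
  -- moments
  have hm1 : ∫ x, f x ∂μ = 1/2 := by
    have h1 : ∫ x, f x ∂μ = ∫ t, t ∂(Measure.map f μ) :=
      (integral_map hfm.aemeasurable aestronglyMeasurable_id).symm
    rw [h1, hmap, MeasureTheory.integral_Icc_eq_integral_Ioc,
      ← intervalIntegral.integral_of_le (zero_le_one (α := ℝ))]
    simp [integral_id]
  have hm2 : ∫ x, f x ^ 2 ∂μ = 1/3 := by
    have h1 : ∫ x, f x ^ 2 ∂μ = ∫ t, t ^ 2 ∂(Measure.map f μ) :=
      (integral_map hfm.aemeasurable
        (measurable_id.pow_const 2).aestronglyMeasurable).symm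
    rw [h1, hmap, MeasureTheory.integral_Icc_eq_integral_Ioc,
      ← intervalIntegral.integral_of_le (zero_le_one (α := ℝ))]
    rw [integral_pow]
    norm_num
  -- variance bound
  have hvar := var_tensor P Δ n f hfm hfb hsens
  rw [hm1, hm2] at hvar
  have hΔ2 : 1 / (3 * (n:ℝ)) ≤ Δ ^ 2 := by
    rw [div_le_iff₀ (by linarith)]
    nlinarith
  constructor
  · -- 0.37 / √n ≤ Δ
    have hsq : (0.37 / Real.sqrt n) ^ 2 ≤ Δ ^ 2 := by
      rw [div_pow, Real.sq_sqrt hnRpos.le]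
      calc (0.37:ℝ) ^ 2 / n ≤ 1 / (3 * n) := by
            rw [div_le_div_iff₀ hnRpos (by linarith)]
            nlinarith
        _ ≤ Δ ^ 2 := hΔ2
    have hnn : 0 ≤ 0.37 / Real.sqrt n := by positivity
    calc 0.37 / Real.sqrt n = Real.sqrt ((0.37 / Real.sqrt n) ^ 2) := (Real.sqrt_sq hnn).symm
      _ ≤ Real.sqrt (Δ ^ 2) := Real.sqrt_le_sqrt hsq
      _ = Δ := Real.sqrt_sq hΔ0
  · intro d hd0 hd1
    have hL : 0 < Real.log (1 / d) := Real.log_pos (by rw [lt_div_iff₀ hd0]; linarith)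
    have hD2 : (0:ℝ) < (n / 2) * Real.log (1 / d) := by positivity
    have hkey : (1 / 2 - d) ^ 2 ≤ ((n / 2) * Real.log (1 / d)) * Δ ^ 2 := by
      have h6 := log_ineq hd0 hd1
      have h7 : ((n:ℝ) / 2) * Real.log (1 / d) * Δ ^ 2 ≥ ((n:ℝ) / 2) * Real.log (1 / d) * (1 / (3 * n)) := by
        apply mul_le_mul_of_nonneg_left hΔ2 (by positivity)
      have h8 : ((n:ℝ) / 2) * Real.log (1 / d) * (1 / (3 * n)) = Real.log (1 / d) / 6 := by
        field_simp; ring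
      nlinarith
    have hnum : (0:ℝ) ≤ 1 / 2 - d := by linarith
    rw [div_le_iff₀ (Real.sqrt_pos.mpr hD2)]
    have hrhs : 0 ≤ Δ * Real.sqrt ((n / 2) * Real.log (1 / d)) := by positivity
    have hsq2 : (1 / 2 - d) ^ 2 ≤ (Δ * Real.sqrt ((n / 2) * Real.log (1 / d))) ^ 2 := by
      rw [mul_pow, Real.sq_sqrt hD2.le]
      linarith [hkey]
    calc 1 / 2 - d = Real.sqrt ((1 / 2 - d) ^ 2) := (Real.sqrt_sq hnum).symm
      _ ≤ Real.sqrt ((Δ * Real.sqrt ((n / 2) * Real.log (1 / d))) ^ 2) := Real.sqrt_le_sqrt hsq2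
      _ = Δ * Real.sqrt ((n / 2) * Real.log (1 / d)) := Real.sqrt_sq hrhs
end
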